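/- arXiv:2006.15215 — 2 statements merged into one kernel-verified Lean document; each statement's English description precedes it below -/
import Mathlib

section
/- (Sylvester theorem for matching polynomials) Let c : i_1 → i_n be a Hamiltonian path in the weighted graph G, and let θ ∈ ℝ be such that μ(H)(θ) ≠ 0 for every induced weighted subgraph H of G on a nonempty vertex set. Let V_c(θ) be the number of indices j ∈ {1,…,n} such that μ(G∖{i_1,…,i_{j−1}})(θ)/μ(G∖{i_1,…,i_j})(θ) > 0, and let V_{−c}(θ) be defined analogously for the reversed path −c : i_n → i_1. Then both V_c(θ) and V_{−c}(θ) equal the number of roots of μ(G), counted with multiplicity, in the interval (−∞, θ). -/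
open Polynomial
open scoped Classical

/-- A matching of the weighted graph with edge weights `lam`, inside the vertex set `A`:
a set of pairs `(j,k)` with `j < k`, `lam j k ≠ 0`, endpoints in `A`,
no two pairs sharing a vertex. -/
def IsMatching {n : ℕ} (lam : Fin n → Fin n → ℝ) (A : Finset (Fin n))
    (M : Finset (Fin n × Fin n)) : Prop :=
  (∀ e ∈ M, e.1 < e.2 ∧ lam e.1 e.2 ≠ 0 ∧ e.1 ∈ A ∧ e.2 ∈ A) ∧
  ∀ e ∈ M, ∀ f ∈ M, e ≠ f → e.1 ≠ f.1 ∧ e.1 ≠ f.2 ∧ e.2 ≠ f.1 ∧ e.2 ≠ f.2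

/-- The vertices covered by a matching. -/
def mVerts {n : ℕ} (M : Finset (Fin n × Fin n)) : Finset (Fin n) :=
  M.image Prod.fst ∪ M.image Prod.snd

/-- The finite set of matchings inside the vertex set `A`. -/
noncomputable def matchings {n : ℕ} (lam : Fin n → Fin n → ℝ) (A : Finset (Fin n)) :
    Finset (Finset (Fin n × Fin n)) :=
  Finset.univ.filter fun M => IsMatching lam A M

/-- The weighted matching polynomial of the induced weighted subgraph on the vertex set `A`
(the matching polynomial of the empty graph is `1`). -/
noncomputable def mu {n : ℕ} (r : Fin n → ℝ) (lam : Fin n → Fin n → ℝ)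
    (A : Finset (Fin n)) : Polynomial ℝ :=
  ∑ M ∈ matchings lam A,
    (∏ i ∈ A \ mVerts M, (X - C (r i))) * C (∏ e ∈ M, lam e.1 e.2)

/-- The multivariate matching polynomial evaluated at the complex numbers `x 1, …, x n`. -/
noncomputable def muC {n : ℕ} (lam : Fin n → Fin n → ℝ) (x : Fin n → ℂ) : ℂ :=
  ∑ M ∈ matchings lam (Finset.univ : Finset (Fin n)),
    (∏ i ∈ Finset.univ \ mVerts M, x i) * ∏ e ∈ M, (lam e.1 e.2 : ℂ)

/-- The constant `B_G`: for `n ≥ 3` the maximum over vertices `j` and sets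
`A ⊆ [n] ∖ {j}` with `|A| = n - 2` of `∑_{k ∈ A} (-λ_{jk})`; `-λ_{12}/4` for `n = 2`;
`0` for `n = 1`. -/
noncomputable def BG (n : ℕ) (lam : Fin n → Fin n → ℝ) : ℝ :=
  if 3 ≤ n then
    sSup {S : ℝ | ∃ j : Fin n, ∃ A : Finset (Fin n),
      j ∉ A ∧ A.card = n - 2 ∧ S = ∑ k ∈ A, -lam j k}
  else if h : n = 2 then -lam ⟨0, by omega⟩ ⟨1, by omega⟩ / 4
  else 0

/-- `l` is a path from `i` to `j` inside the vertex set `A`: a nonempty list of distinct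
vertices of `A`, starting at `i`, ending at `j`, with consecutive vertices joined by
edges of nonzero weight. -/
def IsPathIn {n : ℕ} (lam : Fin n → Fin n → ℝ) (A : Finset (Fin n)) (i j : Fin n)
    (l : List (Fin n)) : Prop :=
  l ≠ [] ∧ l.Nodup ∧ (∀ v ∈ l, v ∈ A) ∧ l.head? = some i ∧ l.getLast? = some j ∧
    l.Chain' fun u v => lam u v ≠ 0

/-- `λ_c`: the product of `-λ_e` over the edges `e` of the path `c` (equal to `1` for a
trivial path). -/
def pathWeight {n : ℕ} (lam : Fin n → Fin n → ℝ) (l : List (Fin n)) : ℝ :=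
  ((l.zip l.tail).map fun p => -lam p.1 p.2).prod

/-- A real polynomial viewed as a rational function. -/
noncomputable def toRF (p : Polynomial ℝ) : RatFunc ℝ :=
  algebraMap (Polynomial ℝ) (RatFunc ℝ) p

/-- The graph continued fraction `α_v = μ(A)/μ(A ∖ v)` as a rational function. -/
noncomputable def alpha {n : ℕ} (r : Fin n → ℝ) (lam : Fin n → Fin n → ℝ) (v : Fin n)
    (A : Finset (Fin n)) : RatFunc ℝ :=
  toRF (mu r lam A) / toRF (mu r lam (A.erase v))

/-- `λ_{i∼j} = -(∑_{c ∈ [i→j]} λ_c · μ(A∖c)²) / μ(A∖{i,j})²` as a rational function. -/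
noncomputable def lamSim {n : ℕ} (r : Fin n → ℝ) (lam : Fin n → Fin n → ℝ) (i j : Fin n)
    (A : Finset (Fin n)) : RatFunc ℝ :=
  -(∑ᶠ l ∈ {l : List (Fin n) | IsPathIn lam A i j l},
      toRF (C (pathWeight lam l) * mu r lam (A \ l.toFinset) ^ 2)) /
    toRF (mu r lam ((A.erase i).erase j)) ^ 2

/-- The value of a rational function at `θ`, taken after cancelling common factors;
`none` encodes the value `∞` (a pole). -/
noncomputable def valAt (f : RatFunc ℝ) (θ : ℝ) : Option ℝ :=
  if f.denom.eval θ = 0 then none else some (f.num.eval θ / f.denom.eval θ)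

/-- The set `0_{θ,A}` of θ-essential vertices: `m_θ(A∖v) = m_θ(A) - 1`. -/
def zeroSet {n : ℕ} (r : Fin n → ℝ) (lam : Fin n → Fin n → ℝ) (θ : ℝ)
    (A : Finset (Fin n)) : Set (Fin n) :=
  {v | v ∈ A ∧
    (mu r lam A).rootMultiplicity θ = (mu r lam (A.erase v)).rootMultiplicity θ + 1}

/-- The set `∞_{θ,A}`: `m_θ(A∖v) = m_θ(A) + 1`. -/
def infSet {n : ℕ} (r : Fin n → ℝ) (lam : Fin n → Fin n → ℝ) (θ : ℝ)
    (A : Finset (Fin n)) : Set (Fin n) :=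
  {v | v ∈ A ∧
    (mu r lam (A.erase v)).rootMultiplicity θ = (mu r lam A).rootMultiplicity θ + 1}

/-- The set `+_{θ,A}`: `m_θ(A∖v) = m_θ(A)` and `α_v(A)(θ) > 0`. -/
def plusSet {n : ℕ} (r : Fin n → ℝ) (lam : Fin n → Fin n → ℝ) (θ : ℝ)
    (A : Finset (Fin n)) : Set (Fin n) :=
  {v | v ∈ A ∧
    (mu r lam (A.erase v)).rootMultiplicity θ = (mu r lam A).rootMultiplicity θ ∧
    ∃ t : ℝ, valAt (alpha r lam v A) θ = some t ∧ 0 < t}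

/-- The set `−_{θ,A}`: `m_θ(A∖v) = m_θ(A)` and `α_v(A)(θ) < 0`. -/
def minusSet {n : ℕ} (r : Fin n → ℝ) (lam : Fin n → Fin n → ℝ) (θ : ℝ)
    (A : Finset (Fin n)) : Set (Fin n) :=
  {v | v ∈ A ∧
    (mu r lam (A.erase v)).rootMultiplicity θ = (mu r lam A).rootMultiplicity θ ∧
    ∃ t : ℝ, valAt (alpha r lam v A) θ = some t ∧ t < 0}

/-- The frontier `∂0_{θ,A}`: vertices not in `0_{θ,A}` with a neighbor in `0_{θ,A}`. -/
def frontierZero {n : ℕ} (r : Fin n → ℝ) (lam : Fin n → Fin n → ℝ) (θ : ℝ)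
    (A : Finset (Fin n)) : Set (Fin n) :=
  {v | v ∈ A ∧ v ∉ zeroSet r lam θ A ∧ ∃ w ∈ zeroSet r lam θ A, lam v w ≠ 0}

/-- The underlying simple graph: edges are the pairs with nonzero edge weight. -/
def wGraph {n : ℕ} (lam : Fin n → Fin n → ℝ) : SimpleGraph (Fin n) :=
  SimpleGraph.fromRel fun j k => lam j k ≠ 0


section Basic
variable {n : ℕ} (r : Fin n → ℝ) (lam : Fin n → Fin n → ℝ)

lemma mem_matchings {lam' : Fin n → Fin n → ℝ} {A : Finset (Fin n)} {M : Finset (Fin n × Fin n)} :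
    M ∈ matchings lam' A ↔ IsMatching lam' A M := by
  simp [matchings]

lemma mVerts_subset {A : Finset (Fin n)} {M : Finset (Fin n × Fin n)}
    (h : IsMatching lam A M) : mVerts M ⊆ A := by
  intro x hx
  simp only [mVerts, Finset.mem_union, Finset.mem_image] at hx
  rcases hx with ⟨e, he, rfl⟩ | ⟨e, he, rfl⟩
  · exact (h.1 e he).2.2.1
  · exact (h.1 e he).2.2.2

lemma mem_mVerts {M : Finset (Fin n × Fin n)} {x : Fin n} :
    x ∈ mVerts M ↔ ∃ e ∈ M, e.1 = x ∨ e.2 = x := by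
  simp only [mVerts, Finset.mem_union, Finset.mem_image]
  constructor
  · rintro (⟨e, he, rfl⟩ | ⟨e, he, rfl⟩) <;> exact ⟨e, he, by simp⟩
  · rintro ⟨e, he, rfl | rfl⟩
    · exact Or.inl ⟨e, he, rfl⟩
    · exact Or.inr ⟨e, he, rfl⟩

lemma matching_empty (A : Finset (Fin n)) : IsMatching lam A ∅ := by
  constructor <;> simp

lemma matchings_empty : matchings lam (∅ : Finset (Fin n)) = {∅} := by
  ext M
  simp only [mem_matchings, Finset.mem_singleton]
  constructor
  · intro h
    by_contra hM
    obtain ⟨e, he⟩ := Finset.nonempty_iff_ne_empty.2 hM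
    exact absurd (h.1 e he).2.2.1 (by simp)
  · rintro rfl; exact matching_empty lam ∅

lemma mu_empty : mu r lam (∅ : Finset (Fin n)) = 1 := by
  simp [mu, matchings_empty, mVerts]

lemma card_mVerts {A : Finset (Fin n)} {M : Finset (Fin n × Fin n)}
    (h : IsMatching lam A M) : (mVerts M).card = 2 * M.card := by
  have hinj1 : Set.InjOn Prod.fst (M : Set (Fin n × Fin n)) := by
    intro e he f hf hef
    by_contra hne
    exact ((h.2 e he f hf hne).1 hef).elim
  have hinj2 : Set.InjOn Prod.snd (M : Set (Fin n × Fin n)) := by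
    intro e he f hf hef
    by_contra hne
    exact ((h.2 e he f hf hne).2.2.2 hef).elim
  have hdisj : Disjoint (M.image Prod.fst) (M.image Prod.snd) := by
    rw [Finset.disjoint_left]
    rintro x hx1 hx2
    simp only [Finset.mem_image] at hx1 hx2
    obtain ⟨e, he, rfl⟩ := hx1
    obtain ⟨f, hf, hff⟩ := hx2
    by_cases hef : e = f
    · subst hef
      exact absurd hff (ne_of_gt (h.1 e he).1)
    · exact ((h.2 e he f hf hef).2.1 hff.symm).elim
  rw [mVerts, Finset.card_union_of_disjoint hdisj,
    Finset.card_image_of_injOn hinj1, Finset.card_image_of_injOn hinj2]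
  ring

lemma card_sdiff_mVerts {A : Finset (Fin n)} {M : Finset (Fin n × Fin n)}
    (h : IsMatching lam A M) : (A \ mVerts M).card = A.card - 2 * M.card := by
  rw [Finset.card_sdiff_of_subset (mVerts_subset lam h), card_mVerts lam h]

lemma mu_eq_prod_add (A : Finset (Fin n)) :
    mu r lam A = (∏ i ∈ A, (X - C (r i))) +
      ∑ M ∈ (matchings lam A).erase ∅,
        (∏ i ∈ A \ mVerts M, (X - C (r i))) * C (∏ e ∈ M, lam e.1 e.2) := by
  rw [mu, ← Finset.add_sum_erase _ _ (show (∅ : Finset (Fin n × Fin n)) ∈ matchings lam A from mem_matchings.2 (matching_empty lam A))]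
  simp [mVerts]

lemma degree_term_lt {A : Finset (Fin n)} {M : Finset (Fin n × Fin n)}
    (h : IsMatching lam A M) (hM : M ≠ ∅) :
    ((∏ i ∈ A \ mVerts M, (X - C (r i))) * C (∏ e ∈ M, lam e.1 e.2)).degree
      < (A.card : WithBot ℕ) := by
  have hMc : 1 ≤ M.card := Finset.card_pos.2 (Finset.nonempty_iff_ne_empty.2 hM)
  have h2 : 2 * M.card ≤ A.card := by
    calc 2 * M.card = (mVerts M).card := (card_mVerts lam h).symm
    _ ≤ A.card := Finset.card_le_card (mVerts_subset lam h)
  have hd : (∏ i ∈ A \ mVerts M, (X - C (r i))).degree = ((A \ mVerts M).card : WithBot ℕ) := by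
    rw [degree_prod]
    simp [degree_X_sub_C]
  calc ((∏ i ∈ A \ mVerts M, (X - C (r i))) * C (∏ e ∈ M, lam e.1 e.2)).degree
      ≤ (∏ i ∈ A \ mVerts M, (X - C (r i))).degree + (C (∏ e ∈ M, lam e.1 e.2)).degree :=
        degree_mul_le _ _
    _ ≤ (∏ i ∈ A \ mVerts M, (X - C (r i))).degree + 0 := by
        gcongr
        exact degree_C_le
    _ = ((A \ mVerts M).card : WithBot ℕ) := by rw [add_zero, hd]
    _ < (A.card : WithBot ℕ) := by
        rw [card_sdiff_mVerts lam h]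
        exact_mod_cast Nat.sub_lt_of_pos_le (by omega) h2

lemma degree_rest_lt (A : Finset (Fin n)) :
    (∑ M ∈ (matchings lam A).erase ∅,
        (∏ i ∈ A \ mVerts M, (X - C (r i))) * C (∏ e ∈ M, lam e.1 e.2)).degree
      < (A.card : WithBot ℕ) := by
  apply lt_of_le_of_lt (degree_sum_le _ _)
  rw [Finset.sup_lt_iff (by exact_mod_cast WithBot.bot_lt_coe _)]
  intro M hM
  exact degree_term_lt r lam (mem_matchings.1 (Finset.mem_of_mem_erase hM))
    (Finset.ne_of_mem_erase hM)

lemma mu_monic (A : Finset (Fin n)) : (mu r lam A).Monic := by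
  rw [mu_eq_prod_add]
  apply Polynomial.Monic.add_of_left
  · exact monic_prod_of_monic _ _ fun i _ => monic_X_sub_C _
  · refine lt_of_lt_of_eq (degree_rest_lt r lam A) ?_
    rw [degree_prod]; simp [degree_X_sub_C]

lemma mu_degree (A : Finset (Fin n)) : (mu r lam A).degree = (A.card : WithBot ℕ) := by
  rw [mu_eq_prod_add, degree_add_eq_left_of_degree_lt, degree_prod]
  · simp [degree_X_sub_C]
  · refine lt_of_lt_of_eq (degree_rest_lt r lam A) ?_
    rw [degree_prod]; simp [degree_X_sub_C]

lemma mu_natDegree (A : Finset (Fin n)) : (mu r lam A).natDegree = A.card :=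
  natDegree_eq_of_degree_eq_some (mu_degree r lam A)

lemma mu_ne_zero (A : Finset (Fin n)) : mu r lam A ≠ 0 :=
  (mu_monic r lam A).ne_zero

end Basic

section Recurrence
variable {n : ℕ} (r : Fin n → ℝ) (lam : Fin n → Fin n → ℝ)

/-- The ordered edge between `v` and `w`. -/
def ed (v w : Fin n) : Fin n × Fin n := if v < w then (v, w) else (w, v)

lemma ed_fst_lt_snd {v w : Fin n} (h : v ≠ w) : (ed v w).1 < (ed v w).2 := by
  rcases lt_or_gt_of_ne h with h1 | h1
  · simp [ed, h1]
  · simp only [ed, if_neg (not_lt_of_gt h1)]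
    exact h1

lemma ed_mem_iff {v w x : Fin n} : (ed v w).1 = x ∨ (ed v w).2 = x ↔ x = v ∨ x = w := by
  unfold ed
  split <;> constructor <;> rintro (rfl | rfl) <;> simp

lemma matching_erase_iff {A : Finset (Fin n)} {v : Fin n} {M : Finset (Fin n × Fin n)} :
    IsMatching lam (A.erase v) M ↔ IsMatching lam A M ∧ v ∉ mVerts M := by
  constructor
  · intro h
    refine ⟨⟨fun e he => ⟨(h.1 e he).1, (h.1 e he).2.1,
      Finset.mem_of_mem_erase (h.1 e he).2.2.1, Finset.mem_of_mem_erase (h.1 e he).2.2.2⟩,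
      h.2⟩, ?_⟩
    intro hv
    obtain ⟨e, he, hor⟩ := mem_mVerts.1 hv
    rcases hor with h1 | h1
    · exact absurd ((h.1 e he).2.2.1) (h1 ▸ Finset.notMem_erase v A)
    · exact absurd ((h.1 e he).2.2.2) (h1 ▸ Finset.notMem_erase v A)
  · rintro ⟨h, hv⟩
    refine ⟨fun e he => ⟨(h.1 e he).1, (h.1 e he).2.1, ?_, ?_⟩, h.2⟩
    · refine Finset.mem_erase.2 ⟨?_, (h.1 e he).2.2.1⟩
      rintro rfl
      exact hv (mem_mVerts.2 ⟨e, he, Or.inl rfl⟩)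
    · refine Finset.mem_erase.2 ⟨?_, (h.1 e he).2.2.2⟩
      rintro rfl
      exact hv (mem_mVerts.2 ⟨e, he, Or.inr rfl⟩)

lemma matchings_erase (A : Finset (Fin n)) (v : Fin n) :
    matchings lam (A.erase v) = (matchings lam A).filter fun M => v ∉ mVerts M := by
  ext M
  simp only [mem_matchings, Finset.mem_filter, matching_erase_iff]

lemma part1 {A : Finset (Fin n)} {v : Fin n} (hv : v ∈ A) :
    ∑ M ∈ (matchings lam A).filter (fun M => v ∉ mVerts M),
      (∏ i ∈ A \ mVerts M, (X - C (r i))) * C (∏ e ∈ M, lam e.1 e.2)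
      = (X - C (r v)) * mu r lam (A.erase v) := by
  rw [← matchings_erase, mu, Finset.mul_sum]
  apply Finset.sum_congr rfl
  intro M hM
  have hvM : v ∉ mVerts M := (matching_erase_iff lam |>.1 (mem_matchings.1 hM)).2
  have : A \ mVerts M = insert v ((A.erase v) \ mVerts M) := by
    ext x
    simp only [Finset.mem_sdiff, Finset.mem_insert, Finset.mem_erase]
    constructor
    · rintro ⟨hx, hx2⟩
      by_cases hxv : x = v
      · exact Or.inl hxv
      · exact Or.inr ⟨⟨hxv, hx⟩, hx2⟩
    · rintro (rfl | ⟨⟨h1, h2⟩, h3⟩)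
      · exact ⟨hv, hvM⟩
      · exact ⟨h2, h3⟩
  rw [this, Finset.prod_insert (by simp), mul_assoc]

lemma lam_ed (hsym : ∀ j k, lam j k = lam k j) (v w : Fin n) :
    lam (ed v w).1 (ed v w).2 = lam v w := by
  unfold ed
  split
  · rfl
  · exact hsym w v

lemma ed_inj {v w w' : Fin n} (hw : w ≠ v) (hw' : w' ≠ v) (h : ed v w = ed v w') :
    w = w' := by
  unfold ed at h
  split_ifs at h <;> simp only [Prod.ext_iff] at h <;> tauto

lemma ed_fst_eq (v w : Fin n) : (ed v w).1 = v ∨ (ed v w).1 = w := by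
  unfold ed; split
  · exact Or.inl rfl
  · exact Or.inr rfl

lemma ed_snd_eq (v w : Fin n) : (ed v w).2 = v ∨ (ed v w).2 = w := by
  unfold ed; split
  · exact Or.inr rfl
  · exact Or.inl rfl

lemma mVerts_erase_subset (M : Finset (Fin n × Fin n)) (e : Fin n × Fin n) :
    mVerts (M.erase e) ⊆ mVerts M := by
  intro x hx
  obtain ⟨f, hf, h⟩ := mem_mVerts.1 hx
  exact mem_mVerts.2 ⟨f, Finset.mem_of_mem_erase hf, h⟩

lemma matching_erase_edge {A : Finset (Fin n)} {v w : Fin n}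
    {M : Finset (Fin n × Fin n)} (h : IsMatching lam A M) (hvw : v ≠ w)
    (he : ed v w ∈ M) :
    IsMatching lam ((A.erase v).erase w) (M.erase (ed v w)) := by
  constructor
  · intro f hf
    have hfM : f ∈ M := Finset.mem_of_mem_erase hf
    have hne : ed v w ≠ f := fun hh => (Finset.ne_of_mem_erase hf) hh.symm
    have hd := h.2 (ed v w) he f hfM hne
    have h1 : f.1 ≠ v ∧ f.1 ≠ w := by
      constructor <;> intro hh
      · rcases ed_mem_iff.2 (Or.inl hh) with h' | h'
        · exact hd.1 h'
        · exact hd.2.2.1 h'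
      · rcases ed_mem_iff.2 (Or.inr hh) with h' | h'
        · exact hd.1 h'
        · exact hd.2.2.1 h'
    have h2 : f.2 ≠ v ∧ f.2 ≠ w := by
      constructor <;> intro hh
      · rcases ed_mem_iff.2 (Or.inl hh) with h' | h'
        · exact hd.2.1 h'
        · exact hd.2.2.2 h'
      · rcases ed_mem_iff.2 (Or.inr hh) with h' | h'
        · exact hd.2.1 h'
        · exact hd.2.2.2 h'
    exact ⟨(h.1 f hfM).1, (h.1 f hfM).2.1,
      Finset.mem_erase.2 ⟨h1.2, Finset.mem_erase.2 ⟨h1.1, (h.1 f hfM).2.2.1⟩⟩,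
      Finset.mem_erase.2 ⟨h2.2, Finset.mem_erase.2 ⟨h2.1, (h.1 f hfM).2.2.2⟩⟩⟩
  · intro e' he' f hf hne
    exact h.2 e' (Finset.mem_of_mem_erase he') f (Finset.mem_of_mem_erase hf) hne

lemma matching_insert_edge (hsym : ∀ j k, lam j k = lam k j) {A : Finset (Fin n)}
    {v w : Fin n} {M' : Finset (Fin n × Fin n)} (hvw : v ≠ w) (hlam : lam v w ≠ 0)
    (hv : v ∈ A) (hw : w ∈ A)
    (hM' : IsMatching lam ((A.erase v).erase w) M') :
    IsMatching lam A (insert (ed v w) M') := by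
  have hend : ∀ f ∈ M', f.1 ≠ v ∧ f.1 ≠ w ∧ f.2 ≠ v ∧ f.2 ≠ w := by
    intro f hf
    have h1 := (hM'.1 f hf).2.2.1
    have h2 := (hM'.1 f hf).2.2.2
    rw [Finset.mem_erase, Finset.mem_erase] at h1 h2
    exact ⟨h1.2.1, h1.1, h2.2.1, h2.1⟩
  have hedM' : ed v w ∉ M' := by
    intro hmem
    rcases ed_mem_iff.2 (Or.inl (rfl : v = v)) with h' | h'
    · exact (hend _ hmem).1 h'
    · exact (hend _ hmem).2.2.1 h'
  constructor
  · intro e he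
    rcases Finset.mem_insert.1 he with rfl | heM'
    · refine ⟨ed_fst_lt_snd hvw, ?_, ?_, ?_⟩
      · rw [lam_ed lam hsym]; exact hlam
      · rcases ed_fst_eq (n := n) v w with h'' | h'' <;> rw [h'']
        · exact hv
        · exact hw
      · rcases ed_snd_eq (n := n) v w with h'' | h'' <;> rw [h'']
        · exact hv
        · exact hw
    · exact ⟨(hM'.1 e heM').1, (hM'.1 e heM').2.1,
        Finset.mem_of_mem_erase (Finset.mem_of_mem_erase (hM'.1 e heM').2.2.1),
        Finset.mem_of_mem_erase (Finset.mem_of_mem_erase (hM'.1 e heM').2.2.2)⟩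
  · intro e he f hf hne
    rcases Finset.mem_insert.1 he with rfl | heM' <;>
      rcases Finset.mem_insert.1 hf with hf' | hfM'
    · exact absurd hf'.symm hne
    · obtain ⟨a1, a2, a3, a4⟩ := hend f hfM'
      constructor
      · intro hh; rcases (ed_mem_iff (x := f.1)).1 (Or.inl hh) with h' | h'
        · exact a1 h'
        · exact a2 h'
      refine ⟨?_, ?_, ?_⟩
      · intro hh; rcases (ed_mem_iff (x := f.2)).1 (Or.inl hh) with h' | h'
        · exact a3 h'
        · exact a4 h'
      · intro hh; rcases (ed_mem_iff (x := f.1)).1 (Or.inr hh) with h' | h'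
        · exact a1 h'
        · exact a2 h'
      · intro hh; rcases (ed_mem_iff (x := f.2)).1 (Or.inr hh) with h' | h'
        · exact a3 h'
        · exact a4 h'
    · subst hf'
      obtain ⟨a1, a2, a3, a4⟩ := hend e heM'
      constructor
      · intro hh; rcases (ed_mem_iff (x := e.1)).1 (Or.inl hh.symm) with h' | h'
        · exact a1 h'
        · exact a2 h'
      refine ⟨?_, ?_, ?_⟩
      · intro hh; rcases (ed_mem_iff (x := e.1)).1 (Or.inr hh.symm) with h' | h'
        · exact a1 h'
        · exact a2 h'
      · intro hh; rcases (ed_mem_iff (x := e.2)).1 (Or.inl hh.symm) with h' | h'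
        · exact a3 h'
        · exact a4 h'
      · intro hh; rcases (ed_mem_iff (x := e.2)).1 (Or.inr hh.symm) with h' | h'
        · exact a3 h'
        · exact a4 h'
    · exact hM'.2 e heM' f hfM' hne


lemma ed_eq_iff {v w x : Fin n} : (x = (ed v w).1 ∨ x = (ed v w).2) ↔ (x = v ∨ x = w) := by
  unfold ed; split <;> constructor <;> rintro (rfl | rfl) <;> simp

lemma mVerts_insert (e : Fin n × Fin n) (M : Finset (Fin n × Fin n)) :
    mVerts (insert e M) = insert e.1 (insert e.2 (mVerts M)) := by
  ext x
  simp only [mVerts, Finset.image_insert, Finset.mem_union, Finset.mem_insert]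
  tauto

lemma sdiff_mVerts_insert {A : Finset (Fin n)} {v w : Fin n}
    {M' : Finset (Fin n × Fin n)} :
    A \ mVerts (insert (ed v w) M') = ((A.erase v).erase w) \ mVerts M' := by
  ext x
  have hiff := (ed_eq_iff (n := n) (v := v) (w := w) (x := x))
  simp only [Finset.mem_sdiff, mVerts_insert, Finset.mem_insert, Finset.mem_erase, not_or]
  tauto

lemma ed_not_mem_matching {A : Finset (Fin n)} {v w : Fin n}
    {M' : Finset (Fin n × Fin n)} (hM' : IsMatching lam ((A.erase v).erase w) M') :
    ed v w ∉ M' := by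
  intro hmem
  have h1 := (hM'.1 _ hmem).2.2.1
  rcases ed_fst_eq (n := n) v w with h | h
  · rw [h] at h1
    exact (Finset.mem_erase.1 (Finset.mem_erase.1 h1).2).1 rfl
  · rw [h] at h1
    exact (Finset.mem_erase.1 h1).1 rfl

lemma ed_has_v (v w : Fin n) : (ed v w).1 = v ∨ (ed v w).2 = v :=
  ed_mem_iff.2 (Or.inl rfl)

lemma part2_inner (hsym : ∀ j k, lam j k = lam k j) {A : Finset (Fin n)} {v w : Fin n}
    (hv : v ∈ A) (hw : w ∈ A.erase v) :
    ∑ M ∈ (matchings lam A).filter (fun M => ed v w ∈ M),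
      (∏ i ∈ A \ mVerts M, (X - C (r i))) * C (∏ e ∈ M, lam e.1 e.2)
    = C (lam v w) * mu r lam ((A.erase v).erase w) := by
  obtain ⟨hwv, hwA⟩ := Finset.mem_erase.1 hw
  by_cases hlam : lam v w = 0
  · have hempty : (matchings lam A).filter (fun M => ed v w ∈ M) = ∅ := by
      rw [Finset.filter_eq_empty_iff]
      intro M hM hed
      have hne := ((mem_matchings.1 hM).1 _ hed).2.1
      rw [lam_ed lam hsym] at hne
      exact hne hlam
    rw [hempty, hlam]
    simp
  · rw [mu, Finset.mul_sum]
    symm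
    refine Finset.sum_bij' (fun M' _ => insert (ed v w) M') (fun M _ => M.erase (ed v w))
      ?_ ?_ ?_ ?_ ?_
    · intro M' hM'
      have hins := matching_insert_edge lam hsym (Ne.symm hwv) hlam hv hwA (mem_matchings.1 hM')
      exact Finset.mem_filter.2 ⟨mem_matchings.2 hins, Finset.mem_insert_self _ _⟩
    · intro M hM
      obtain ⟨hMm, hed⟩ := Finset.mem_filter.1 hM
      exact mem_matchings.2 (matching_erase_edge lam (mem_matchings.1 hMm) (Ne.symm hwv) hed)
    · intro M' hM'
      exact Finset.erase_insert (ed_not_mem_matching lam (mem_matchings.1 hM'))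
    · intro M hM
      exact Finset.insert_erase (Finset.mem_filter.1 hM).2
    · intro M' hM'
      have hnm : ed v w ∉ M' := ed_not_mem_matching lam (mem_matchings.1 hM')
      rw [sdiff_mVerts_insert, Finset.prod_insert hnm, lam_ed lam hsym, map_mul]
      ring

lemma part2 (hsym : ∀ j k, lam j k = lam k j) {A : Finset (Fin n)} {v : Fin n}
    (hv : v ∈ A) :
    ∑ M ∈ (matchings lam A).filter (fun M => v ∈ mVerts M),
      (∏ i ∈ A \ mVerts M, (X - C (r i))) * C (∏ e ∈ M, lam e.1 e.2)
    = ∑ w ∈ A.erase v, C (lam v w) * mu r lam ((A.erase v).erase w) := by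
  have hcongr : ∀ w ∈ A.erase v, C (lam v w) * mu r lam ((A.erase v).erase w)
      = ∑ M ∈ (matchings lam A).filter (fun M => ed v w ∈ M),
          (∏ i ∈ A \ mVerts M, (X - C (r i))) * C (∏ e ∈ M, lam e.1 e.2) :=
    fun w hw => (part2_inner r lam hsym hv hw).symm
  rw [Finset.sum_congr rfl hcongr, eq_comm]
  calc ∑ w ∈ A.erase v, ∑ M ∈ (matchings lam A).filter (fun M => ed v w ∈ M),
        (∏ i ∈ A \ mVerts M, (X - C (r i))) * C (∏ e ∈ M, lam e.1 e.2)
      = ∑ w ∈ A.erase v, ∑ M ∈ matchings lam A,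
          if ed v w ∈ M then (∏ i ∈ A \ mVerts M, (X - C (r i))) * C (∏ e ∈ M, lam e.1 e.2)
          else 0 := by
        refine Finset.sum_congr rfl fun w _ => ?_
        rw [Finset.sum_filter]
    _ = ∑ M ∈ matchings lam A, ∑ w ∈ A.erase v,
          if ed v w ∈ M then (∏ i ∈ A \ mVerts M, (X - C (r i))) * C (∏ e ∈ M, lam e.1 e.2)
          else 0 := Finset.sum_comm
    _ = ∑ M ∈ matchings lam A,
          if v ∈ mVerts M then (∏ i ∈ A \ mVerts M, (X - C (r i))) * C (∏ e ∈ M, lam e.1 e.2)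
          else 0 := by
        refine Finset.sum_congr rfl fun M hM => ?_
        by_cases hvM : v ∈ mVerts M
        · rw [if_pos hvM]
          obtain ⟨e, he, hor⟩ := mem_mVerts.1 hvM
          have hlt := ((mem_matchings.1 hM).1 e he).1
          obtain ⟨w0, hw0mem, hed0, hw0ne⟩ :
              ∃ w0, w0 ∈ A.erase v ∧ ed v w0 = e ∧ w0 ≠ v := by
            rcases hor with h1 | h1
            · refine ⟨e.2, Finset.mem_erase.2 ⟨?_, ((mem_matchings.1 hM).1 e he).2.2.2⟩, ?_, ?_⟩
              · intro hh; exact absurd (h1.trans hh.symm) (ne_of_lt hlt)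
              · have hlt2 : v < e.2 := h1 ▸ hlt
                unfold ed; rw [if_pos hlt2, ← h1]
              · intro hh; exact absurd (h1.trans hh.symm) (ne_of_lt hlt)
            · refine ⟨e.1, Finset.mem_erase.2 ⟨?_, ((mem_matchings.1 hM).1 e he).2.2.1⟩, ?_, ?_⟩
              · intro hh; exact absurd (hh.trans h1.symm) (ne_of_lt hlt)
              · have hlt2 : e.1 < v := h1 ▸ hlt
                unfold ed; rw [if_neg (not_lt.2 (le_of_lt hlt2)), ← h1]
              · intro hh; exact absurd (hh.trans h1.symm) (ne_of_lt hlt)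
          have hstep : ∀ w ∈ A.erase v, w ≠ w0 →
              (if ed v w ∈ M then
                (∏ i ∈ A \ mVerts M, (X - C (r i))) * C (∏ e ∈ M, lam e.1 e.2)
              else 0) = 0 := by
            intro w hwmem hne
            rw [if_neg]
            intro hedM
            by_cases heq : ed v w = e
            · exact hne (ed_inj (Finset.mem_erase.1 hwmem).1 hw0ne (heq.trans hed0.symm))
            · have hd := (mem_matchings.1 hM).2 _ hedM _ he heq
              rcases ed_has_v v w with h1 | h1 <;> rcases hor with h2 | h2
              · exact hd.1 (h1.trans h2.symm)
              · exact hd.2.1 (h1.trans h2.symm)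
              · exact hd.2.2.1 (h1.trans h2.symm)
              · exact hd.2.2.2 (h1.trans h2.symm)
          rw [Finset.sum_eq_single_of_mem w0 hw0mem hstep,
            if_pos (show ed v w0 ∈ M by rw [hed0]; exact he)]
        · rw [if_neg hvM]
          refine Finset.sum_eq_zero fun w _ => ?_
          rw [if_neg]
          intro hedM
          exact hvM (mem_mVerts.2 ⟨ed v w, hedM, ed_has_v v w⟩)
    _ = ∑ M ∈ (matchings lam A).filter (fun M => v ∈ mVerts M),
          (∏ i ∈ A \ mVerts M, (X - C (r i))) * C (∏ e ∈ M, lam e.1 e.2) :=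
        (Finset.sum_filter _ _).symm

theorem mu_recurrence (hsym : ∀ j k, lam j k = lam k j) {A : Finset (Fin n)} {v : Fin n}
    (hv : v ∈ A) :
    mu r lam A = (X - C (r v)) * mu r lam (A.erase v) +
      ∑ w ∈ A.erase v, C (lam v w) * mu r lam ((A.erase v).erase w) := by
  rw [mu, ← Finset.sum_filter_add_sum_filter_not (matchings lam A) (fun M => v ∉ mVerts M),
    part1 r lam hv]
  congr 1
  rw [← part2 r lam hsym hv]
  refine Finset.sum_congr (Finset.filter_congr fun M _ => ?_) fun _ _ => rfl
  simp [not_not]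

end Recurrence
section HL
variable {n : ℕ} (r : Fin n → ℝ) (lam : Fin n → Fin n → ℝ)

theorem heilmann_lieb (hsym : ∀ j k, lam j k = lam k j) (hnonpos : ∀ j k, lam j k ≤ 0)
    (A : Finset (Fin n)) : ∀ z : ℂ, 0 < z.im →
    (Polynomial.aeval z (mu r lam A) ≠ 0 ∧
     ∀ v ∈ A, 0 < ((Polynomial.aeval z (mu r lam A)) /
        (Polynomial.aeval z (mu r lam (A.erase v)))).im) := by
  induction A using Finset.strongInduction with
  | _ A ih =>
    intro z hz
    rcases A.eq_empty_or_nonempty with rfl | hA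
    · refine ⟨?_, by simp⟩
      rw [mu_empty]
      simp
    have key : ∀ v ∈ A,
        Polynomial.aeval z (mu r lam A) = (Polynomial.aeval z (mu r lam (A.erase v))) *
          ((z - (r v : ℂ)) + ∑ w ∈ A.erase v, (lam v w : ℂ) *
            (Polynomial.aeval z (mu r lam ((A.erase v).erase w)) /
             Polynomial.aeval z (mu r lam (A.erase v)))) ∧
        0 < ((z - (r v : ℂ)) + ∑ w ∈ A.erase v, (lam v w : ℂ) *
            (Polynomial.aeval z (mu r lam ((A.erase v).erase w)) /
             Polynomial.aeval z (mu r lam (A.erase v)))).im := by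
      intro v hv
      have hsub : A.erase v ⊂ A := Finset.erase_ssubset hv
      have hPw : Polynomial.aeval z (mu r lam (A.erase v)) ≠ 0 := (ih _ hsub z hz).1
      constructor
      · rw [mu_recurrence r lam hsym hv]
        rw [map_add, map_mul, map_sub, Polynomial.aeval_X, Polynomial.aeval_C, map_sum,
          mul_add, Finset.mul_sum]
        congr 1
        · rw [Complex.coe_algebraMap]
          ring
        · refine Finset.sum_congr rfl fun w hw => ?_
          rw [map_mul, Polynomial.aeval_C, Complex.coe_algebraMap,
            mul_comm ((Polynomial.aeval z) (mu r lam (A.erase v))), mul_assoc,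
            div_mul_cancel₀ _ hPw]
      · have him : ∀ w ∈ A.erase v,
            0 ≤ ((lam v w : ℂ) * (Polynomial.aeval z (mu r lam ((A.erase v).erase w)) /
              Polynomial.aeval z (mu r lam (A.erase v)))).im := by
          intro w hw
          have hrat := (ih _ hsub z hz).2 w hw
          have hPww : Polynomial.aeval z (mu r lam ((A.erase v).erase w)) ≠ 0 :=
            (ih _ ((Finset.erase_ssubset hw).trans hsub) z hz).1
          have hinv : (Polynomial.aeval z (mu r lam ((A.erase v).erase w)) /
              Polynomial.aeval z (mu r lam (A.erase v))).im < 0 := by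
            have h1 : (Polynomial.aeval z (mu r lam ((A.erase v).erase w)) /
                Polynomial.aeval z (mu r lam (A.erase v)))
                = (Polynomial.aeval z (mu r lam (A.erase v)) /
                   Polynomial.aeval z (mu r lam ((A.erase v).erase w)))⁻¹ := by
              rw [inv_div]
            rw [h1, Complex.inv_im]
            apply div_neg_of_neg_of_pos
            · linarith
            · rw [Complex.normSq_pos]
              intro h0
              rw [h0] at hrat
              simp at hrat
          have him2 : ((lam v w : ℂ) * (Polynomial.aeval z (mu r lam ((A.erase v).erase w)) /
              Polynomial.aeval z (mu r lam (A.erase v)))).im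
              = lam v w * (Polynomial.aeval z (mu r lam ((A.erase v).erase w)) /
                Polynomial.aeval z (mu r lam (A.erase v))).im := by
            simp [Complex.mul_im]
          rw [him2]
          nlinarith [hnonpos v w, hinv.le]
        have : 0 ≤ (∑ w ∈ A.erase v, (lam v w : ℂ) *
            (Polynomial.aeval z (mu r lam ((A.erase v).erase w)) /
             Polynomial.aeval z (mu r lam (A.erase v)))).im := by
          rw [Complex.im_sum]
          exact Finset.sum_nonneg him
        rw [Complex.add_im, Complex.sub_im, Complex.ofReal_im]
        linarith
    obtain ⟨v, hv⟩ := hA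
    have hPw : Polynomial.aeval z (mu r lam (A.erase v)) ≠ 0 :=
      (ih _ (Finset.erase_ssubset hv) z hz).1
    obtain ⟨heqv, hposv⟩ := key v hv
    have hne : Polynomial.aeval z (mu r lam A) ≠ 0 := by
      rw [heqv]
      apply mul_ne_zero hPw
      intro h0
      rw [h0] at hposv
      simp at hposv
    refine ⟨hne, fun u hu => ?_⟩
    obtain ⟨hequ, hposu⟩ := key u hu
    have hPwu : Polynomial.aeval z (mu r lam (A.erase u)) ≠ 0 :=
      (ih _ (Finset.erase_ssubset hu) z hz).1
    rw [hequ, mul_comm, mul_div_assoc, div_self hPwu, mul_one]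
    exact hposu

end HL

section RealRooted

lemma card_roots_aux : ∀ d (p : ℝ[X]), p.Monic → p.natDegree = d →
    (∀ z : ℂ, Polynomial.aeval z p = 0 → z.im = 0) → p.roots.card = d := by
  intro d
  induction d using Nat.strong_induction_on with
  | _ d ih =>
    intro p hm hd hz
    rcases Nat.eq_zero_or_pos d with rfl | hdpos
    · have hp1 : p = 1 := hm.natDegree_eq_zero.1 hd
      simp [hp1]
    · have hdeg : 0 < (p.map (algebraMap ℝ ℂ)).degree := by
        rw [Polynomial.degree_map]
        exact Polynomial.natDegree_pos_iff_degree_pos.1 (hd ▸ hdpos)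
      obtain ⟨z, hzroot⟩ := Complex.exists_root hdeg
      have hzeval : Polynomial.aeval z p = 0 := by
        rw [Polynomial.aeval_def, ← Polynomial.eval_map]
        exact hzroot
      have him := hz z hzeval
      have hzx : z = ((z.re : ℝ) : ℂ) := Complex.ext rfl (by simp [him])
      set x := z.re with hx
      have hroot : p.IsRoot x := by
        have h0 : Polynomial.eval₂ (algebraMap ℝ ℂ) ((algebraMap ℝ ℂ) x) p = 0 := by
          rw [← Polynomial.eval_map]
          rw [hzx] at hzroot
          exact hzroot
        rw [Polynomial.eval₂_hom] at h0
        have h1 : ((Polynomial.eval x p : ℝ) : ℂ) = 0 := by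
          rw [← h0, Complex.coe_algebraMap]
        exact Complex.ofReal_eq_zero.1 h1
      obtain ⟨q, hq⟩ := Polynomial.dvd_iff_isRoot.2 hroot
      have hqm : q.Monic := by
        have hm2 : ((X - C x) * q).Monic := hq ▸ hm
        exact (Polynomial.monic_X_sub_C x).of_mul_monic_left hm2
      have hqnd : q.natDegree = d - 1 := by
        have hnd : p.natDegree = 1 + q.natDegree := by
          rw [hq, Polynomial.natDegree_mul (Polynomial.X_sub_C_ne_zero x) hqm.ne_zero,
            Polynomial.natDegree_X_sub_C]
        omega
      have hqroots : ∀ z : ℂ, Polynomial.aeval z q = 0 → z.im = 0 := by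
        intro w hw
        apply hz w
        rw [hq, map_mul, hw, mul_zero]
      have hcard := ih (d - 1) (by omega) q hqm hqnd hqroots
      rw [hq, Polynomial.roots_mul (hq ▸ hm.ne_zero), Polynomial.roots_X_sub_C]
      rw [Multiset.card_add, hcard]
      simp
      omega

lemma mu_roots_card {n : ℕ} (r : Fin n → ℝ) (lam : Fin n → Fin n → ℝ)
    (hsym : ∀ j k, lam j k = lam k j) (hnonpos : ∀ j k, lam j k ≤ 0)
    (A : Finset (Fin n)) : (mu r lam A).roots.card = A.card := by
  apply card_roots_aux A.card (mu r lam A) (mu_monic r lam A) (mu_natDegree r lam A)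
  intro z hz
  by_contra him
  rcases lt_or_gt_of_ne him with h1 | h1
  · -- im < 0 : use conjugate
    have hconj : Polynomial.aeval ((starRingEnd ℂ) z) (mu r lam A) = 0 := by
      have := Polynomial.aeval_algHom_apply (Complex.conjAe.toAlgHom) z (mu r lam A)
      rw [hz] at this
      simpa using this
    have := (heilmann_lieb r lam hsym hnonpos A ((starRingEnd ℂ) z)
      (by simpa using h1)).1
    exact this hconj
  · exact (heilmann_lieb r lam hsym hnonpos A z h1).1 hz

lemma mu_eq_prod_roots {n : ℕ} (r : Fin n → ℝ) (lam : Fin n → Fin n → ℝ)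
    (hsym : ∀ j k, lam j k = lam k j) (hnonpos : ∀ j k, lam j k ≤ 0)
    (A : Finset (Fin n)) :
    ((mu r lam A).roots.map fun a => X - C a).prod = mu r lam A :=
  prod_multiset_X_sub_C_of_monic_of_roots_card_eq (mu_monic r lam A)
    ((mu_roots_card r lam hsym hnonpos A).trans (mu_natDegree r lam A).symm)

end RealRooted

section Polar
open Real

lemma factor_polar {x ε : ℝ} (hε : 0 < ε) :
    (x : ℂ) + (ε : ℂ) * Complex.I
      = (Real.sqrt (x ^ 2 + ε ^ 2) : ℂ)
        * Complex.exp ((((π / 2 - Real.arctan (x / ε)) : ℝ) : ℂ) * Complex.I) := by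
  have hsq : Real.sqrt (1 + (x / ε) ^ 2) = Real.sqrt (x ^ 2 + ε ^ 2) / ε := by
    rw [eq_div_iff hε.ne', ← Real.sqrt_sq hε.le, ← Real.sqrt_mul (by positivity)]
    congr 1
    field_simp
    linear_combination (-(√(ε ^ 2) ^ 2 + x ^ 2)) * Real.sq_sqrt (sq_nonneg ε)
  have hsqpos : 0 < Real.sqrt (x ^ 2 + ε ^ 2) := Real.sqrt_pos.2 (by positivity)
  have hcos : Real.cos (π / 2 - Real.arctan (x / ε))
      = x / Real.sqrt (x ^ 2 + ε ^ 2) := by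
    rw [Real.cos_pi_div_two_sub, Real.sin_arctan, hsq]
    field_simp
  have hsin : Real.sin (π / 2 - Real.arctan (x / ε))
      = ε / Real.sqrt (x ^ 2 + ε ^ 2) := by
    rw [Real.sin_pi_div_two_sub, Real.cos_arctan, hsq, one_div_div]
  rw [Complex.exp_mul_I, ← Complex.ofReal_cos, ← Complex.ofReal_sin, hcos, hsin]
  have hs0 : ((Real.sqrt (x ^ 2 + ε ^ 2) : ℝ) : ℂ) ≠ 0 := by
    exact_mod_cast hsqpos.ne'
  push_cast
  field_simp

end Polar
section MultisetHelpers
open Real Filter Topology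

noncomputable def argSum (θ : ℝ) (m : Multiset ℝ) (ε : ℝ) : ℝ :=
  (m.map (fun a => π / 2 - Real.arctan ((θ - a) / ε))).sum

lemma multiset_prod_pos {m : Multiset ℝ} (h : ∀ a ∈ m, 0 < a) : 0 < m.prod := by
  induction m using Multiset.induction with
  | empty => simp
  | cons a m ih =>
    rw [Multiset.prod_cons]
    exact mul_pos (h a (Multiset.mem_cons_self a m))
      (ih fun b hb => h b (Multiset.mem_cons_of_mem hb))

lemma prod_polar (θ : ℝ) (m : Multiset ℝ) {ε : ℝ} (hε : 0 < ε) :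
    (m.map (fun a => ((θ - a : ℝ) : ℂ) + (ε : ℂ) * Complex.I)).prod
      = (((m.map (fun a => Real.sqrt ((θ - a) ^ 2 + ε ^ 2))).prod : ℝ) : ℂ)
        * Complex.exp (((argSum θ m ε : ℝ) : ℂ) * Complex.I) := by
  induction m using Multiset.induction with
  | empty => simp [argSum]
  | cons a m ih =>
    simp only [Multiset.map_cons, Multiset.prod_cons, ih, argSum, Multiset.sum_cons]
    rw [factor_polar hε, Complex.ofReal_add, add_mul, Complex.exp_add, Complex.ofReal_mul]
    ring

lemma argSum_continuousOn (θ : ℝ) (m : Multiset ℝ) :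
    ContinuousOn (argSum θ m) (Set.Ioi 0) := by
  induction m using Multiset.induction with
  | empty =>
    have : argSum θ 0 = fun _ => 0 := funext fun ε => by simp [argSum]
    rw [this]; exact continuousOn_const
  | cons a m ih =>
    have : argSum θ (a ::ₘ m) = fun ε => (π / 2 - Real.arctan ((θ - a) / ε)) + argSum θ m ε := by
      funext ε
      simp [argSum]
    rw [this]
    refine ContinuousOn.add (ContinuousOn.sub continuousOn_const ?_) ih
    exact Real.continuous_arctan.comp_continuousOn
      (continuousOn_const.div continuousOn_id fun x hx => ne_of_gt hx)

lemma argSum_tendsto_atTop (θ : ℝ) (m : Multiset ℝ) :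
    Tendsto (argSum θ m) atTop (𝓝 ((Multiset.card m) * (π / 2))) := by
  induction m using Multiset.induction with
  | empty => simp only [argSum, Multiset.map_zero, Multiset.sum_zero, Multiset.card_zero,
      Nat.cast_zero, zero_mul]; exact tendsto_const_nhds
  | cons a m ih =>
    have heq : argSum θ (a ::ₘ m) = fun ε => (π / 2 - Real.arctan ((θ - a) / ε)) + argSum θ m ε := by
      funext ε
      simp [argSum]
    rw [heq]
    have h1 : Tendsto (fun ε => Real.arctan ((θ - a) / ε)) atTop (𝓝 0) := by
      have h2 : Tendsto (fun ε : ℝ => (θ - a) / ε) atTop (𝓝 0) :=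
        Filter.Tendsto.div_atTop tendsto_const_nhds tendsto_id
      have := (Real.continuous_arctan.tendsto 0).comp h2
      rwa [Real.arctan_zero] at this
    have h3 : Tendsto (fun ε => π / 2 - Real.arctan ((θ - a) / ε)) atTop (𝓝 (π / 2)) := by
      have := (tendsto_const_nhds (x := π/2) (f := atTop (α := ℝ))).sub h1
      simpa using this
    have := h3.add ih
    convert this using 2
    simp [Multiset.card_cons]
    ring

lemma argSum_tendsto_zero (θ : ℝ) (m : Multiset ℝ) (hne : ∀ a ∈ m, a ≠ θ) :
    Tendsto (argSum θ m) (𝓝[>] 0)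
      (𝓝 (((m.filter (fun a => ¬ a < θ)).card) * π)) := by
  induction m using Multiset.induction with
  | empty => simp only [argSum, Multiset.map_zero, Multiset.sum_zero, Multiset.filter_zero,
      Multiset.card_zero, Nat.cast_zero, zero_mul]; exact tendsto_const_nhds
  | cons a m ih =>
    have heq : argSum θ (a ::ₘ m) = fun ε => (π / 2 - Real.arctan ((θ - a) / ε)) + argSum θ m ε := by
      funext ε
      simp [argSum]
    rw [heq]
    have hih := ih fun b hb => hne b (Multiset.mem_cons_of_mem hb)
    have hane := hne a (Multiset.mem_cons_self a m)
    by_cases hlt : a < θ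
    · -- θ - a > 0 ; arctan term → π/2 ; single term → 0
      have h2 : Tendsto (fun ε : ℝ => (θ - a) / ε) (𝓝[>] 0) atTop := by
        simp only [div_eq_mul_inv]
        exact Tendsto.const_mul_atTop (by linarith) tendsto_inv_nhdsGT_zero
      have h3 : Tendsto (fun ε => Real.arctan ((θ - a) / ε)) (𝓝[>] 0) (𝓝 (π / 2)) :=
        (Real.tendsto_arctan_atTop.mono_right nhdsWithin_le_nhds).comp h2
      have h4 : Tendsto (fun ε => π / 2 - Real.arctan ((θ - a) / ε)) (𝓝[>] 0) (𝓝 0) := by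
        have := (tendsto_const_nhds (x := π/2) (f := 𝓝[>] (0:ℝ))).sub h3
        simpa using this
      have := h4.add hih
      rw [Multiset.filter_cons_of_neg _ (by simpa using hlt)]
      simpa using this
    · -- a > θ : θ - a < 0 ; arctan → -π/2 ; single term → π
      have h2 : Tendsto (fun ε : ℝ => (θ - a) / ε) (𝓝[>] 0) atBot := by
        simp only [div_eq_mul_inv]
        apply Tendsto.const_mul_atTop_of_neg
        · have h5 : θ < a := lt_of_le_of_ne (not_lt.1 hlt) (fun h => hane h.symm)
          linarith
        · exact tendsto_inv_nhdsGT_zero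
      have h3 : Tendsto (fun ε => Real.arctan ((θ - a) / ε)) (𝓝[>] 0) (𝓝 (-(π / 2))) :=
        (Real.tendsto_arctan_atBot.mono_right nhdsWithin_le_nhds).comp h2
      have h4 : Tendsto (fun ε => π / 2 - Real.arctan ((θ - a) / ε)) (𝓝[>] 0) (𝓝 π) := by
        have := (tendsto_const_nhds (x := π/2) (f := 𝓝[>] (0:ℝ))).sub h3
        have hππ : π / 2 - -(π / 2) = π := by ring
        rwa [hππ] at this
      have := h4.add hih
      rw [Multiset.filter_cons_of_pos _ (by simpa using hlt)]
      rw [Multiset.card_cons]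
      convert this using 2
      push_cast
      ring

end MultisetHelpers

section Topology
open Real Filter Topology Set

lemma limit_mem_Icc_of_sin_pos {D : ℝ → ℝ} (hc : ContinuousOn D (Set.Ioi 0))
    (hs : ∀ ε ∈ Set.Ioi (0:ℝ), 0 < Real.sin (D ε))
    (htop : Tendsto D atTop (𝓝 (π / 2))) {L : ℝ}
    (h0 : Tendsto D (𝓝[>] 0) (𝓝 L)) : L ∈ Set.Icc 0 π := by
  have key : ∀ ε ∈ Set.Ioi (0:ℝ), D ε ∈ Set.Ioo 0 π := by
    intro ε hε
    by_contra hout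
    have hsinε := hs ε hε
    have hDne0 : D ε ≠ 0 := by intro h; rw [h] at hsinε; simp at hsinε
    have hDneπ : D ε ≠ π := by intro h; rw [h] at hsinε; simp at hsinε
    rw [Set.mem_Ioo] at hout; push_neg at hout
    have hcases : D ε < 0 ∨ π < D ε := by
      by_cases h1 : 0 < D ε
      · exact Or.inr (lt_of_le_of_ne (hout h1) (Ne.symm hDneπ))
      · exact Or.inl (lt_of_le_of_ne (not_lt.1 h1) hDne0)
    have hev : ∀ᶠ x in atTop, D x ∈ Set.Ioo 0 π :=
      htop (Ioo_mem_nhds (by positivity) (by linarith [Real.pi_pos]))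
    obtain ⟨ε1, hε1⟩ := (hev.and (eventually_gt_atTop ε)).exists
    have hsub : Set.Icc ε ε1 ⊆ Set.Ioi 0 := fun x hx => lt_of_lt_of_le hε hx.1
    have hconts : ContinuousOn D (Set.Icc ε ε1) := hc.mono hsub
    rcases hcases with h1 | h1
    · have hmem : (0:ℝ) ∈ Set.Icc (D ε) (D ε1) := ⟨h1.le, hε1.1.1.le⟩
      obtain ⟨x, hx, hDx⟩ := intermediate_value_Icc hε1.2.le hconts hmem
      have := hs x (hsub hx)
      rw [hDx] at this; simp at this
    · have hmem : (π:ℝ) ∈ Set.Icc (D ε1) (D ε) := ⟨hε1.1.2.le, h1.le⟩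
      obtain ⟨x, hx, hDx⟩ := intermediate_value_Icc' hε1.2.le hconts hmem
      have := hs x (hsub hx)
      rw [hDx] at this; simp at this
  have h1 : L ∈ closure (Set.Ioo 0 π) := by
    refine mem_closure_of_tendsto h0 ?_
    filter_upwards [eventually_mem_nhdsWithin] with x hx
    exact key x hx
  rwa [closure_Ioo (ne_of_lt Real.pi_pos)] at h1

lemma prod_theta_sub_sign (θ : ℝ) (m : Multiset ℝ) (hne : ∀ a ∈ m, a ≠ θ) :
    ∃ c : ℝ, 0 < c ∧ (m.map (fun a => θ - a)).prod
      = (-1) ^ ((m.filter (fun a => ¬ a < θ)).card) * c := by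
  induction m using Multiset.induction with
  | empty => exact ⟨1, one_pos, by simp⟩
  | cons a m ih =>
    obtain ⟨c, hc, hprod⟩ := ih fun b hb => hne b (Multiset.mem_cons_of_mem hb)
    have hane := hne a (Multiset.mem_cons_self a m)
    rw [Multiset.map_cons, Multiset.prod_cons, hprod]
    by_cases hlt : a < θ
    · refine ⟨(θ - a) * c, mul_pos (by linarith) hc, ?_⟩
      rw [Multiset.filter_cons_of_neg _ (by simpa using hlt)]
      ring
    · have h2 : θ < a := lt_of_le_of_ne (not_lt.1 hlt) (fun h => hane h.symm)
      refine ⟨(a - θ) * c, mul_pos (by linarith) hc, ?_⟩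
      rw [Multiset.filter_cons_of_pos _ (by simpa using hlt), Multiset.card_cons]
      ring

end Topology

section Counting
open Real Filter Topology

lemma aeval_prod_factors {p : ℝ[X]} (hfact : (p.roots.map fun a => X - C a).prod = p)
    (z : ℂ) : Polynomial.aeval z p = (p.roots.map (fun a : ℝ => z - (a : ℂ))).prod := by
  conv_lhs => rw [← hfact]
  rw [map_multiset_prod, Multiset.map_map]
  congr 1
  apply Multiset.map_congr rfl
  intro a _
  simp [Complex.coe_algebraMap]

lemma aeval_theta_eps {p : ℝ[X]} (hfact : (p.roots.map fun a => X - C a).prod = p)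
    (θ ε : ℝ) :
    Polynomial.aeval ((θ : ℂ) + (ε : ℂ) * Complex.I) p
      = (p.roots.map (fun a => ((θ - a : ℝ) : ℂ) + (ε : ℂ) * Complex.I)).prod := by
  rw [aeval_prod_factors hfact]
  congr 1
  apply Multiset.map_congr rfl
  intro a _
  push_cast
  ring

lemma eval_eq_prod_roots {p : ℝ[X]} (hfact : (p.roots.map fun a => X - C a).prod = p)
    (θ : ℝ) : p.eval θ = (p.roots.map (fun a => θ - a)).prod := by
  conv_lhs => rw [← hfact]
  rw [Polynomial.eval_multiset_prod, Multiset.map_map]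
  congr 1
  apply Multiset.map_congr rfl
  intro a _
  simp

lemma im_real_mul_exp (r t : ℝ) :
    ((r : ℂ) * Complex.exp ((t : ℂ) * Complex.I)).im = r * Real.sin t := by
  rw [Complex.exp_mul_I, ← Complex.ofReal_cos, ← Complex.ofReal_sin]
  simp only [Complex.mul_im, Complex.add_re, Complex.add_im, Complex.ofReal_re,
    Complex.ofReal_im, Complex.mul_re, Complex.I_re, Complex.I_im]
  ring

lemma counting {p q : ℝ[X]} (θ : ℝ)
    (hpm : p.Monic) (hqm : q.Monic)
    (hpc : p.roots.card = p.natDegree) (hqc : q.roots.card = q.natDegree)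
    (hdeg : p.natDegree = q.natDegree + 1)
    (hpθ : p.eval θ ≠ 0) (hqθ : q.eval θ ≠ 0)
    (hpick : ∀ z : ℂ, 0 < z.im →
      0 < (Polynomial.aeval z p / Polynomial.aeval z q).im) :
    (p.roots.filter (· < θ)).card
      = (q.roots.filter (· < θ)).card + (if 0 < p.eval θ / q.eval θ then 1 else 0) := by
  have hfactp : (p.roots.map fun a => X - C a).prod = p :=
    prod_multiset_X_sub_C_of_monic_of_roots_card_eq hpm hpc
  have hfactq : (q.roots.map fun a => X - C a).prod = q :=
    prod_multiset_X_sub_C_of_monic_of_roots_card_eq hqm hqc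
  have hnep : ∀ a ∈ p.roots, a ≠ θ := by
    rintro a ha rfl
    exact hpθ (Polynomial.isRoot_of_mem_roots ha)
  have hneq : ∀ a ∈ q.roots, a ≠ θ := by
    rintro a ha rfl
    exact hqθ (Polynomial.isRoot_of_mem_roots ha)
  set ap := (p.roots.filter (fun a => ¬ a < θ)).card with hap
  set aq := (q.roots.filter (fun a => ¬ a < θ)).card with haq
  set D := fun ε => argSum θ p.roots ε - argSum θ q.roots ε with hD
  -- sine positivity
  have hsin : ∀ ε ∈ Set.Ioi (0:ℝ), 0 < Real.sin (D ε) := by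
    intro ε hε
    rw [Set.mem_Ioi] at hε
    have hz : (0:ℝ) < ((θ : ℂ) + (ε : ℂ) * Complex.I).im := by simp [hε]
    have him := hpick _ hz
    set Rp := (p.roots.map (fun a => Real.sqrt ((θ - a) ^ 2 + ε ^ 2))).prod with hRp
    set Rq := (q.roots.map (fun a => Real.sqrt ((θ - a) ^ 2 + ε ^ 2))).prod with hRq
    have hRppos : 0 < Rp := multiset_prod_pos (by
      intro x hx
      obtain ⟨a, _, rfl⟩ := Multiset.mem_map.1 hx
      positivity)
    have hRqpos : 0 < Rq := multiset_prod_pos (by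
      intro x hx
      obtain ⟨a, _, rfl⟩ := Multiset.mem_map.1 hx
      positivity)
    have hratio : Polynomial.aeval ((θ : ℂ) + (ε : ℂ) * Complex.I) p /
        Polynomial.aeval ((θ : ℂ) + (ε : ℂ) * Complex.I) q
        = ((Rp / Rq : ℝ) : ℂ) * Complex.exp (((D ε : ℝ) : ℂ) * Complex.I) := by
      rw [aeval_theta_eps hfactp, aeval_theta_eps hfactq, prod_polar θ p.roots hε,
        prod_polar θ q.roots hε]
      have hexpq : Complex.exp (((argSum θ q.roots ε : ℝ) : ℂ) * Complex.I) ≠ 0 :=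
        Complex.exp_ne_zero _
      have hRqne : ((Rq : ℝ) : ℂ) ≠ 0 := by exact_mod_cast hRqpos.ne'
      rw [div_eq_iff (mul_ne_zero hRqne hexpq)]
      rw [hD]
      push_cast
      rw [sub_mul, Complex.exp_sub]
      field_simp
      rfl
    rw [hratio, im_real_mul_exp] at him
    have hpos : 0 < Rp / Rq := div_pos hRppos hRqpos
    nlinarith
  -- continuity and limits
  have hcont : ContinuousOn D (Set.Ioi 0) :=
    (argSum_continuousOn θ p.roots).sub (argSum_continuousOn θ q.roots)
  have htop : Tendsto D atTop (𝓝 (π / 2)) := by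
    have := (argSum_tendsto_atTop θ p.roots).sub (argSum_tendsto_atTop θ q.roots)
    have harith : (Multiset.card p.roots : ℝ) * (π / 2)
        - (Multiset.card q.roots : ℝ) * (π / 2) = π / 2 := by
      rw [hpc, hqc, hdeg]
      push_cast
      ring
    rwa [harith] at this
  have h0 : Tendsto D (𝓝[>] 0) (𝓝 ((ap : ℝ) * π - (aq : ℝ) * π)) :=
    (argSum_tendsto_zero θ p.roots hnep).sub (argSum_tendsto_zero θ q.roots hneq)
  have hL := limit_mem_Icc_of_sin_pos hcont hsin htop h0
  -- ap = aq or ap = aq + 1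
  have hcase : ap = aq ∨ ap = aq + 1 := by
    obtain ⟨h1, h2⟩ := hL
    have hπ := Real.pi_pos
    have e1 : (aq : ℝ) ≤ (ap : ℝ) := by nlinarith
    have e2 : (ap : ℝ) ≤ (aq : ℝ) + 1 := by nlinarith
    have e1' : aq ≤ ap := by exact_mod_cast e1
    have e2' : ap ≤ aq + 1 := by exact_mod_cast e2
    omega
  -- sign analysis
  obtain ⟨cp, hcp, hcpe⟩ := prod_theta_sub_sign θ p.roots hnep
  obtain ⟨cq, hcq, hcqe⟩ := prod_theta_sub_sign θ q.roots hneq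
  have hevalp : p.eval θ = (-1) ^ ap * cp := by rw [eval_eq_prod_roots hfactp]; exact hcpe
  have hevalq : q.eval θ = (-1) ^ aq * cq := by rw [eval_eq_prod_roots hfactq]; exact hcqe
  -- counts of roots below θ
  have hsplitp : (p.roots.filter (· < θ)).card + ap = p.roots.card := by
    rw [hap, ← Multiset.card_add, Multiset.filter_add_not]
  have hsplitq : (q.roots.filter (· < θ)).card + aq = q.roots.card := by
    rw [haq, ← Multiset.card_add, Multiset.filter_add_not]
  rcases hcase with hce | hce
  · -- ratio positive, below-count of p = below-count of q + 1
    have hratpos : 0 < p.eval θ / q.eval θ := by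
      rw [hevalp, hevalq, hce,
        mul_div_mul_left _ _ (pow_ne_zero aq (by norm_num : (-1:ℝ) ≠ 0))]
      exact div_pos hcp hcq
    rw [if_pos hratpos]
    have := hpc; have := hqc
    omega
  · -- ratio negative
    have hratneg : p.eval θ / q.eval θ < 0 := by
      rw [hevalp, hevalq, hce, pow_succ, mul_assoc,
        mul_div_mul_left _ _ (pow_ne_zero aq (by norm_num : (-1:ℝ) ≠ 0))]
      apply div_neg_of_neg_of_pos _ hcq
      linarith
    rw [if_neg (not_lt.2 hratneg.le)]
    have := hpc; have := hqc
    omega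

end Counting

section Assembly
open Finset

variable {n : ℕ} (r : Fin n → ℝ) (lam : Fin n → Fin n → ℝ)

lemma mu_step (hsym : ∀ j k, lam j k = lam k j) (hnonpos : ∀ j k, lam j k ≤ 0)
    {A : Finset (Fin n)} {v : Fin n} (hv : v ∈ A) (θ : ℝ)
    (hA : (mu r lam A).eval θ ≠ 0) (hAe : (mu r lam (A.erase v)).eval θ ≠ 0) :
    ((mu r lam A).roots.filter (· < θ)).card
      = ((mu r lam (A.erase v)).roots.filter (· < θ)).card
        + (if 0 < (mu r lam A).eval θ / (mu r lam (A.erase v)).eval θ then 1 else 0) := by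
  apply counting θ (mu_monic r lam A) (mu_monic r lam (A.erase v))
    ((mu_roots_card r lam hsym hnonpos A).trans (mu_natDegree r lam A).symm)
    ((mu_roots_card r lam hsym hnonpos _).trans (mu_natDegree r lam _).symm)
    (by rw [mu_natDegree, mu_natDegree, Finset.card_erase_of_mem hv]
        have := Finset.card_pos.2 ⟨v, hv⟩
        omega)
    hA hAe
  intro z hz
  exact (heilmann_lieb r lam hsym hnonpos A z hz).2 v hv

lemma sylvester_count (hn : 0 < n)
    (hsym : ∀ j k, lam j k = lam k j) (hnonpos : ∀ j k, lam j k ≤ 0)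
    (l : List (Fin n)) (hnodup : l.Nodup) (hlen : l.length = n) (θ : ℝ)
    (hθ : ∀ A : Finset (Fin n), A.Nonempty → (mu r lam A).eval θ ≠ 0) :
    ((Finset.univ : Finset (Fin n)).filter fun j =>
        0 < (mu r lam (Finset.univ \ (l.take j.val).toFinset)).eval θ /
            (mu r lam (Finset.univ \ (l.take (j.val + 1)).toFinset)).eval θ).card
      = Multiset.card ((mu r lam (Finset.univ : Finset (Fin n))).roots.filter
          fun x => x < θ) := by
  set Aj : ℕ → Finset (Fin n) := fun j => Finset.univ \ (l.take j).toFinset with hAj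
  have hA0 : Aj 0 = Finset.univ := by simp [hAj]
  have hAn : Aj n = ∅ := by
    have h1 : l.take n = l := List.take_of_length_le (le_of_eq hlen)
    have h2 : l.toFinset = Finset.univ := by
      apply Finset.eq_univ_of_card
      rw [List.toFinset_card_of_nodup hnodup, hlen, Fintype.card_fin]
    simp [hAj, h1, h2]
  have hstep : ∀ j, j < n → ∃ v, v ∈ Aj j ∧ Aj (j + 1) = (Aj j).erase v := by
    intro j hj
    have hjl : j < l.length := by omega
    refine ⟨l[j], ?_, ?_⟩
    · rw [hAj]
      simp only [Finset.mem_sdiff, Finset.mem_univ, true_and]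
      intro hmem
      rw [List.mem_toFinset] at hmem
      have hdisj : (l.take j).Disjoint (l.drop j) :=
        List.disjoint_of_nodup_append (by rw [List.take_append_drop]; exact hnodup)
      have hdrop : l[j] ∈ l.drop j := by
        have h0 : (l.drop j)[0]'(by simp; omega) = l[j] := by simp
        rw [← h0]; exact List.getElem_mem _
      exact hdisj hmem hdrop
    · rw [hAj]
      simp only
      rw [List.take_succ, List.getElem?_eq_getElem hjl, Option.toList_some,
        List.toFinset_append]
      have h3 : ([l[j]] : List (Fin n)).toFinset = {l[j]} := by simp
      rw [h3, Finset.union_comm, ← Finset.insert_eq, Finset.sdiff_insert]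
  -- telescoping
  set b : ℕ → ℕ := fun j => ((mu r lam (Aj j)).roots.filter (· < θ)).card with hb
  set ind : ℕ → ℕ := fun j =>
    if 0 < (mu r lam (Aj j)).eval θ / (mu r lam (Aj (j + 1))).eval θ then 1 else 0 with hind
  have hAcard : ∀ j, j ≤ n → (Aj j).card = n - j := by
    intro j hj
    rw [hAj]
    simp only
    rw [Finset.card_sdiff_of_subset (Finset.subset_univ _), Finset.card_univ, Fintype.card_fin,
      List.toFinset_card_of_nodup (hnodup.sublist (List.take_sublist j l)),
      List.length_take, hlen]
    omega
  have hnonempty : ∀ j, j < n → (Aj j).Nonempty := by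
    intro j hj
    rw [← Finset.card_pos, hAcard j (le_of_lt hj)]
    omega
  have hne : ∀ j, j ≤ n → (mu r lam (Aj j)).eval θ ≠ 0 := by
    intro j hj
    rcases eq_or_lt_of_le hj with rfl | hlt
    · rw [hAn, mu_empty]
      simp
    · exact hθ _ (hnonempty j hlt)
  have hbstep : ∀ j, j < n → b j = b (j + 1) + ind j := by
    intro j hj
    obtain ⟨v, hv, hAe⟩ := hstep j hj
    rw [hb, hind]
    simp only
    rw [hAe]
    exact mu_step r lam hsym hnonpos hv θ (hne j (le_of_lt hj))
      (hAe ▸ hne (j + 1) hj)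
  have htel : ∀ m, m ≤ n → b (n - m) = ∑ k ∈ Finset.Ico (n - m) n, ind k := by
    intro m
    induction m with
    | zero =>
      intro _
      simp only [Nat.sub_zero, Finset.Ico_self, Finset.sum_empty]
      rw [hb]
      simp only
      rw [hAn, mu_empty]
      simp
    | succ m ih =>
      intro hm
      have h1 : n - (m + 1) < n := by omega
      have h2 : n - (m + 1) + 1 = n - m := by omega
      rw [hbstep _ h1, Finset.sum_eq_sum_Ico_succ_bot h1, h2, ih (by omega)]
      omega
  have hfinal := htel n le_rfl
  rw [Nat.sub_self] at hfinal
  -- convert card filter to sum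
  have hcard : ((Finset.univ : Finset (Fin n)).filter fun j =>
        0 < (mu r lam (Finset.univ \ (l.take j.val).toFinset)).eval θ /
            (mu r lam (Finset.univ \ (l.take (j.val + 1)).toFinset)).eval θ).card
      = ∑ j ∈ Finset.range n, ind j := by
    rw [Finset.card_filter, ← Fin.sum_univ_eq_sum_range]
  rw [hcard, Finset.range_eq_Ico, ← hfinal, hb]
  simp only
  rw [hA0]

end Assembly


/-- (Sylvester theorem for matching polynomials) for a Hamiltonian path
`c : i₁ → iₙ` (given as a duplicate-free list `l` of all `n` vertices with consecutive
vertices adjacent) and `θ` with `μ(H)(θ) ≠ 0` for every induced subgraph `H` on a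
nonempty vertex set, both `V_c(θ)` and `V_{−c}(θ)` equal the number of roots of `μ(G)`
(with multiplicity) in `(−∞, θ)`. -/
theorem stmt_9 (n : ℕ) (hn : 0 < n) (r : Fin n → ℝ) (lam : Fin n → Fin n → ℝ)
    (hsym : ∀ j k, lam j k = lam k j) (hnonpos : ∀ j k, lam j k ≤ 0)
    (hdiag : ∀ i, lam i i = 0) (l : List (Fin n)) (hnodup : l.Nodup)
    (hlen : l.length = n) (hchain : l.Chain' fun u v => lam u v ≠ 0) (θ : ℝ)
    (hθ : ∀ A : Finset (Fin n), A.Nonempty → (mu r lam A).eval θ ≠ 0) :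
    ((Finset.univ : Finset (Fin n)).filter fun j =>
        0 < (mu r lam (Finset.univ \ (l.take j.val).toFinset)).eval θ /
            (mu r lam (Finset.univ \ (l.take (j.val + 1)).toFinset)).eval θ).card =
      Multiset.card ((mu r lam (Finset.univ : Finset (Fin n))).roots.filter
        fun x => x < θ) ∧
    ((Finset.univ : Finset (Fin n)).filter fun j =>
        0 < (mu r lam (Finset.univ \ (l.reverse.take j.val).toFinset)).eval θ /
            (mu r lam (Finset.univ \ (l.reverse.take (j.val + 1)).toFinset)).eval θ).card =
      Multiset.card ((mu r lam (Finset.univ : Finset (Fin n))).roots.filter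
        fun x => x < θ) := by
  constructor
  · exact sylvester_count r lam hn hsym hnonpos l hnodup hlen θ hθ
  · exact sylvester_count r lam hn hsym hnonpos l.reverse (List.nodup_reverse.2 hnodup)
      (by rw [List.length_reverse, hlen]) θ hθ
end

section
/- For every weighted graph G and every θ ∈ ℝ, the frontier ∂0_{θ,G} is contained in ∞_{θ,G}: every vertex i that is not θ-essential but has a θ-essential neighbor satisfies m_θ(G∖i) = m_θ(G) + 1. -/
open Polynomial
open scoped Classical

namespace WMP

variable {n : ℕ} {lam : Fin n → Fin n → ℝ} {A : Finset (Fin n)} {M : Finset (Fin n × Fin n)}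
  {v : Fin n}

lemma mem_matchings : M ∈ matchings lam A ↔ IsMatching lam A M := by
  simp [matchings]

lemma mem_mVerts : v ∈ mVerts M ↔ ∃ e ∈ M, e.1 = v ∨ e.2 = v := by
  simp only [mVerts, Finset.mem_union, Finset.mem_image]
  constructor
  · rintro (⟨e, he, h⟩ | ⟨e, he, h⟩) <;> exact ⟨e, he, by tauto⟩
  · rintro ⟨e, he, (h | h)⟩
    · exact Or.inl ⟨e, he, h⟩
    · exact Or.inr ⟨e, he, h⟩

lemma mVerts_insert (e : Fin n × Fin n) :
    mVerts (insert e M) = insert e.1 (insert e.2 (mVerts M)) := by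
  ext x
  simp only [mem_mVerts, Finset.mem_insert, mem_mVerts]
  constructor
  · rintro ⟨f, hf | hf, h⟩
    · subst hf; tauto
    · exact Or.inr (Or.inr ⟨f, hf, h⟩)
  · rintro (rfl | rfl | ⟨f, hf, h⟩)
    · exact ⟨e, Or.inl rfl, Or.inl rfl⟩
    · exact ⟨e, Or.inl rfl, Or.inr rfl⟩
    · exact ⟨f, Or.inr hf, h⟩

lemma matchings_empty_vertex : matchings lam (∅ : Finset (Fin n)) = {∅} := by
  ext M
  simp only [mem_matchings, Finset.mem_singleton]
  constructor
  · rintro ⟨h1, -⟩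
    by_contra hM
    obtain ⟨e, he⟩ := Finset.nonempty_iff_ne_empty.2 hM
    exact absurd (h1 e he).2.2.1 (by simp)
  · rintro rfl
    exact ⟨by simp, by simp⟩

lemma mu_empty (r : Fin n → ℝ) : mu r lam (∅ : Finset (Fin n)) = 1 := by
  simp [mu, matchings_empty_vertex]

noncomputable def theEdge (M : Finset (Fin n × Fin n)) (v : Fin n) : Fin n × Fin n :=
  if h : ∃ e ∈ M, e.1 = v ∨ e.2 = v then h.choose else (v, v)

lemma theEdge_spec (h : ∃ e ∈ M, e.1 = v ∨ e.2 = v) :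
    theEdge M v ∈ M ∧ ((theEdge M v).1 = v ∨ (theEdge M v).2 = v) := by
  rw [theEdge, dif_pos h]
  exact h.choose_spec

noncomputable def otherEnd (M : Finset (Fin n × Fin n)) (v : Fin n) : Fin n :=
  if (theEdge M v).1 = v then (theEdge M v).2 else (theEdge M v).1

lemma edge_unique (hM : IsMatching lam A M) {e f : Fin n × Fin n} (he : e ∈ M) (hf : f ∈ M)
    (hev : e.1 = v ∨ e.2 = v) (hfv : f.1 = v ∨ f.2 = v) : e = f := by
  by_contra hne
  obtain ⟨h1, h2, h3, h4⟩ := hM.2 e he f hf hne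
  rcases hev with h | h <;> rcases hfv with h' | h' <;> simp_all

def pairOf (v j : Fin n) : Fin n × Fin n := if v < j then (v, j) else (j, v)

lemma pairOf_touch (v j : Fin n) : (pairOf v j).1 = v ∨ (pairOf v j).2 = v := by
  unfold pairOf; split <;> simp

lemma pairOf_spec {j : Fin n} (hne : v ≠ j) :
    ((pairOf v j).1 = v ∧ (pairOf v j).2 = j) ∨ ((pairOf v j).1 = j ∧ (pairOf v j).2 = v) := by
  unfold pairOf; split <;> simp

lemma pairOf_lt {j : Fin n} (hne : v ≠ j) : (pairOf v j).1 < (pairOf v j).2 := by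
  unfold pairOf
  rcases lt_or_gt_of_ne hne with h | h
  · rw [if_pos h]; exact h
  · rw [if_neg (by omega)]; exact h

lemma pairOf_lam (hsym : ∀ j k, lam j k = lam k j) (v j : Fin n) :
    lam (pairOf v j).1 (pairOf v j).2 = lam v j := by
  unfold pairOf; split
  · rfl
  · exact (hsym v j).symm

/-- elements of a matching avoiding `v` and `j` don't touch them -/
lemma notouch {j : Fin n} (hM : IsMatching lam ((A.erase v).erase j) M) {f : Fin n × Fin n}
    (hf : f ∈ M) : f.1 ≠ v ∧ f.2 ≠ v ∧ f.1 ≠ j ∧ f.2 ≠ j := by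
  obtain ⟨-, -, h1, h2⟩ := hM.1 f hf
  rw [Finset.mem_erase, Finset.mem_erase] at h1 h2
  exact ⟨h1.2.1, h2.2.1, h1.1, h2.1⟩

lemma insert_pair_matching (hsym : ∀ j k, lam j k = lam k j) (hv : v ∈ A) {j : Fin n}
    (hj : j ∈ A.erase v) (hl : lam v j ≠ 0) {M : Finset (Fin n × Fin n)}
    (hM : IsMatching lam ((A.erase v).erase j) M) :
    IsMatching lam A (insert (pairOf v j) M) := by
  obtain ⟨hjv, hjA⟩ := Finset.mem_erase.1 hj
  have hne : v ≠ j := fun h => hjv h.symm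
  have hp1 : (pairOf v j).1 = v ∧ (pairOf v j).2 = j ∨ (pairOf v j).1 = j ∧ (pairOf v j).2 = v :=
    pairOf_spec hne
  constructor
  · intro e he
    rcases Finset.mem_insert.1 he with rfl | he
    · refine ⟨pairOf_lt hne, by rw [pairOf_lam hsym]; exact hl, ?_, ?_⟩ <;>
        rcases hp1 with ⟨h1, h2⟩ | ⟨h1, h2⟩ <;> simp [h1, h2, hv, hjA]
    · obtain ⟨l1, l2, m1, m2⟩ := hM.1 e he
      exact ⟨l1, l2, Finset.mem_of_mem_erase (Finset.mem_of_mem_erase m1),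
        Finset.mem_of_mem_erase (Finset.mem_of_mem_erase m2)⟩
  · intro e he f hf hef
    rcases Finset.mem_insert.1 he with rfl | he <;> rcases Finset.mem_insert.1 hf with rfl | hf
    · exact absurd rfl hef
    · obtain ⟨a1, a2, a3, a4⟩ := notouch hM hf
      rcases hp1 with ⟨h1, h2⟩ | ⟨h1, h2⟩ <;> rw [h1, h2] <;>
        exact ⟨by tauto, by tauto, by tauto, by tauto⟩
    · obtain ⟨a1, a2, a3, a4⟩ := notouch hM he
      rcases hp1 with ⟨h1, h2⟩ | ⟨h1, h2⟩ <;> rw [h1, h2] <;>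
        exact ⟨by tauto, by tauto, by tauto, by tauto⟩
    · exact hM.2 e he f hf hef

lemma pair_not_mem {j : Fin n} (hM : IsMatching lam ((A.erase v).erase j) M) :
    pairOf v j ∉ M := by
  intro hmem
  obtain ⟨a1, a2, -, -⟩ := notouch hM hmem
  rcases pairOf_touch v j with h | h
  · exact a1 h
  · exact a2 h

lemma otherEnd_facts (hsym : ∀ j k, lam j k = lam k j) (hMm : IsMatching lam A M)
    (hex : ∃ e ∈ M, e.1 = v ∨ e.2 = v) :
    theEdge M v ∈ M ∧ pairOf v (otherEnd M v) = theEdge M v ∧ otherEnd M v ≠ v ∧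
      lam v (otherEnd M v) ≠ 0 ∧ otherEnd M v ∈ A := by
  obtain ⟨he, hev⟩ := theEdge_spec hex
  set e := theEdge M v with hedef
  obtain ⟨hlt, hl, m1, m2⟩ := hMm.1 _ he
  by_cases h1 : e.1 = v
  · have hj : otherEnd M v = e.2 := by rw [otherEnd, ← hedef, if_pos h1]
    have hlt' : v < e.2 := h1 ▸ hlt
    refine ⟨he, ?_, ?_, ?_, ?_⟩
    · rw [hj, pairOf, if_pos hlt']
      exact Prod.ext h1.symm rfl
    · rw [hj]; exact fun h => absurd (h ▸ hlt') (lt_irrefl v)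
    · rw [hj, ← h1]; exact hl
    · rw [hj]; exact m2
  · have h2 : e.2 = v := hev.resolve_left h1
    have hj : otherEnd M v = e.1 := by rw [otherEnd, ← hedef, if_neg h1]
    have hlt' : e.1 < v := h2 ▸ hlt
    refine ⟨he, ?_, ?_, ?_, ?_⟩
    · rw [hj, pairOf, if_neg (by omega)]
      exact Prod.ext rfl h2.symm
    · rw [hj]; exact fun h => absurd (h ▸ hlt') (lt_irrefl v)
    · rw [hj, hsym v _, ← h2]; exact hl
    · rw [hj]; exact m1

theorem mu_rec (r : Fin n → ℝ) (hsym : ∀ j k, lam j k = lam k j) (hv : v ∈ A) :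
    mu r lam A = (X - C (r v)) * mu r lam (A.erase v)
      + ∑ j ∈ A.erase v, C (lam v j) * mu r lam ((A.erase v).erase j) := by
  have hfilter : (matchings lam A).filter (fun M => v ∉ mVerts M)
      = matchings lam (A.erase v) := by
    ext M
    simp only [Finset.mem_filter, mem_matchings]
    constructor
    · rintro ⟨⟨h1, h2⟩, hvM⟩
      refine ⟨fun e he => ?_, h2⟩
      obtain ⟨l1, l2, m1, m2⟩ := h1 e he
      have e1 : e.1 ≠ v := fun h => hvM (mem_mVerts.2 ⟨e, he, Or.inl h⟩)
      have e2 : e.2 ≠ v := fun h => hvM (mem_mVerts.2 ⟨e, he, Or.inr h⟩)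
      exact ⟨l1, l2, Finset.mem_erase.2 ⟨e1, m1⟩, Finset.mem_erase.2 ⟨e2, m2⟩⟩
    · rintro ⟨h1, h2⟩
      refine ⟨⟨fun e he => ?_, h2⟩, fun hvM => ?_⟩
      · obtain ⟨l1, l2, m1, m2⟩ := h1 e he
        exact ⟨l1, l2, Finset.mem_of_mem_erase m1, Finset.mem_of_mem_erase m2⟩
      · obtain ⟨e, he, hev⟩ := mem_mVerts.1 hvM
        obtain ⟨-, -, m1, m2⟩ := h1 e he
        rcases hev with h | h
        · exact (Finset.mem_erase.1 m1).1 h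
        · exact (Finset.mem_erase.1 m2).1 h
  have huncov : ∑ M ∈ (matchings lam A).filter (fun M => v ∉ mVerts M),
      (∏ i ∈ A \ mVerts M, (X - C (r i))) * C (∏ e ∈ M, lam e.1 e.2)
      = (X - C (r v)) * mu r lam (A.erase v) := by
    rw [hfilter, mu, Finset.mul_sum]
    refine Finset.sum_congr rfl fun M hM => ?_
    have hMm := mem_matchings.1 hM
    have hvM : v ∉ mVerts M := by
      intro hvM
      obtain ⟨e, he, hev⟩ := mem_mVerts.1 hvM
      obtain ⟨-, -, m1, m2⟩ := hMm.1 e he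
      rcases hev with h | h
      · exact (Finset.mem_erase.1 m1).1 h
      · exact (Finset.mem_erase.1 m2).1 h
    have hset : A \ mVerts M = insert v ((A.erase v) \ mVerts M) := by
      ext x
      simp only [Finset.mem_sdiff, Finset.mem_insert, Finset.mem_erase]
      constructor
      · rintro ⟨hxA, hx⟩
        by_cases hxv : x = v
        · exact Or.inl hxv
        · exact Or.inr ⟨⟨hxv, hxA⟩, hx⟩
      · rintro (rfl | ⟨⟨-, hxA⟩, hx⟩)
        · exact ⟨hv, hvM⟩
        · exact ⟨hxA, hx⟩
    rw [hset, Finset.prod_insert (by simp), mul_assoc]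
  have hcov : ∑ M ∈ (matchings lam A).filter (fun M => v ∈ mVerts M),
      (∏ i ∈ A \ mVerts M, (X - C (r i))) * C (∏ e ∈ M, lam e.1 e.2)
      = ∑ j ∈ A.erase v, C (lam v j) * mu r lam ((A.erase v).erase j) := by
    rw [← Finset.sum_filter_of_ne (p := fun j => lam v j ≠ 0)
      (fun j _ hne hl => hne (by rw [hl, map_zero, zero_mul]))]
    have hexp : ∀ j ∈ (A.erase v).filter (fun j => lam v j ≠ 0),
        C (lam v j) * mu r lam ((A.erase v).erase j)
        = ∑ M' ∈ matchings lam ((A.erase v).erase j),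
            C (lam v j) * ((∏ i ∈ ((A.erase v).erase j) \ mVerts M', (X - C (r i)))
              * C (∏ e ∈ M', lam e.1 e.2)) := fun j _ => by rw [mu, Finset.mul_sum]
    rw [Finset.sum_congr rfl hexp, Finset.sum_sigma']
    refine Finset.sum_nbij' (fun M => ⟨otherEnd M v, M.erase (theEdge M v)⟩)
      (fun b => insert (pairOf v b.1) b.2) ?_ ?_ ?_ ?_ ?_
    · -- hi
      intro M hM
      obtain ⟨hMmem, hvM⟩ := Finset.mem_filter.1 hM
      have hMm := mem_matchings.1 hMmem
      obtain ⟨he, hpair, hjv, hjl, hjA⟩ := otherEnd_facts hsym hMm (mem_mVerts.1 hvM)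
      set e := theEdge M v
      set j := otherEnd M v
      have hne : v ≠ j := fun h => hjv h.symm
      have hpe : (e.1 = v ∧ e.2 = j) ∨ (e.1 = j ∧ e.2 = v) := by
        rw [← hpair]; exact pairOf_spec hne
      rw [Finset.mem_sigma]
      constructor
      · exact Finset.mem_filter.2 ⟨Finset.mem_erase.2 ⟨hjv, hjA⟩, hjl⟩
      · rw [mem_matchings]
        constructor
        · intro f hf
          obtain ⟨hfe, hfM⟩ := Finset.mem_erase.1 hf
          obtain ⟨l1, l2, n1, n2⟩ := hMm.1 f hfM
          obtain ⟨d1, d2, d3, d4⟩ := hMm.2 e he f hfM (Ne.symm hfe)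
          have f1 : f.1 ≠ v ∧ f.1 ≠ j := by
            rcases hpe with ⟨a, b⟩ | ⟨a, b⟩
            · rw [← a, ← b]; exact ⟨Ne.symm d1, Ne.symm d3⟩
            · rw [← b, ← a]; exact ⟨Ne.symm d3, Ne.symm d1⟩
          have f2 : f.2 ≠ v ∧ f.2 ≠ j := by
            rcases hpe with ⟨a, b⟩ | ⟨a, b⟩
            · rw [← a, ← b]; exact ⟨Ne.symm d2, Ne.symm d4⟩
            · rw [← b, ← a]; exact ⟨Ne.symm d4, Ne.symm d2⟩
          exact ⟨l1, l2, Finset.mem_erase.2 ⟨f1.2, Finset.mem_erase.2 ⟨f1.1, n1⟩⟩,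
            Finset.mem_erase.2 ⟨f2.2, Finset.mem_erase.2 ⟨f2.1, n2⟩⟩⟩
        · intro a ha b hb hab
          exact hMm.2 a (Finset.mem_of_mem_erase ha) b (Finset.mem_of_mem_erase hb) hab
    · -- hj
      rintro ⟨j, M'⟩ hb
      rw [Finset.mem_sigma] at hb
      obtain ⟨hjf, hM'⟩ := hb
      obtain ⟨hje, hjl⟩ := Finset.mem_filter.1 hjf
      have hM'm := mem_matchings.1 hM'
      refine Finset.mem_filter.2 ⟨mem_matchings.2 (insert_pair_matching hsym hv hje hjl hM'm), ?_⟩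
      exact mem_mVerts.2 ⟨pairOf v j, Finset.mem_insert_self _ _, pairOf_touch v j⟩
    · -- left_inv
      intro M hM
      obtain ⟨hMmem, hvM⟩ := Finset.mem_filter.1 hM
      have hMm := mem_matchings.1 hMmem
      obtain ⟨he, hpair, -, -, -⟩ := otherEnd_facts hsym hMm (mem_mVerts.1 hvM)
      simp only [hpair, Finset.insert_erase he]
    · -- right_inv
      rintro ⟨j, M'⟩ hb
      rw [Finset.mem_sigma] at hb
      obtain ⟨hjf, hM'⟩ := hb
      simp only at hjf hM' ⊢
      obtain ⟨hje, hjl⟩ := Finset.mem_filter.1 hjf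
      have hM'm := mem_matchings.1 hM'
      have hne : v ≠ j := fun h => (Finset.mem_erase.1 hje).1 h.symm
      have hins := insert_pair_matching hsym hv hje hjl hM'm
      have hexp : ∃ e ∈ insert (pairOf v j) M', e.1 = v ∨ e.2 = v :=
        ⟨pairOf v j, Finset.mem_insert_self _ _, pairOf_touch v j⟩
      obtain ⟨hteM, htev⟩ := theEdge_spec hexp
      have hte : theEdge (insert (pairOf v j) M') v = pairOf v j :=
        edge_unique hins hteM (Finset.mem_insert_self _ _) htev (pairOf_touch v j)
      have hoE : otherEnd (insert (pairOf v j) M') v = j := by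
        rw [otherEnd, hte]
        rcases pairOf_spec hne with ⟨h1, h2⟩ | ⟨h1, h2⟩
        · rw [if_pos h1]; exact h2
        · rw [if_neg (by rw [h1]; exact fun h => hne h.symm)]; exact h1
      have hER : (insert (pairOf v j) M').erase (theEdge (insert (pairOf v j) M') v) = M' := by
        rw [hte, Finset.erase_insert (pair_not_mem hM'm)]
      rw [hoE, hER]
    · -- terms
      intro M hM
      obtain ⟨hMmem, hvM⟩ := Finset.mem_filter.1 hM
      have hMm := mem_matchings.1 hMmem
      obtain ⟨he, hpair, hjv, hjl, hjA⟩ := otherEnd_facts hsym hMm (mem_mVerts.1 hvM)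
      set e := theEdge M v with hedef
      set j := otherEnd M v with hjdef
      have hne : v ≠ j := fun h => hjv h.symm
      have hpe : (e.1 = v ∧ e.2 = j) ∨ (e.1 = j ∧ e.2 = v) := by
        rw [← hpair]; exact pairOf_spec hne
      have hlam : lam e.1 e.2 = lam v j := by
        rw [← hpair, pairOf_lam hsym]
      have hprod : (∏ f ∈ M, lam f.1 f.2) = lam v j * ∏ f ∈ M.erase e, lam f.1 f.2 := by
        rw [← hlam]
        exact (Finset.mul_prod_erase M (fun p => lam p.1 p.2) he).symm
      have hW : mVerts M = insert e.1 (insert e.2 (mVerts (M.erase e))) := by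
        conv_lhs => rw [← Finset.insert_erase he]
        exact mVerts_insert e
      have hset : A \ mVerts M = ((A.erase v).erase j) \ mVerts (M.erase e) := by
        ext x
        rw [hW]
        simp only [Finset.mem_sdiff, Finset.mem_erase, Finset.mem_insert, not_or]
        constructor
        · rintro ⟨hxA, hx1, hx2, hx3⟩
          rcases hpe with ⟨a, b⟩ | ⟨a, b⟩
          · exact ⟨⟨b ▸ hx2, a ▸ hx1, hxA⟩, hx3⟩
          · exact ⟨⟨a ▸ hx1, b ▸ hx2, hxA⟩, hx3⟩
        · rintro ⟨⟨hxj, hxv, hxA⟩, hx3⟩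
          rcases hpe with ⟨a, b⟩ | ⟨a, b⟩
          · exact ⟨hxA, a.symm ▸ hxv, b.symm ▸ hxj, hx3⟩
          · exact ⟨hxA, a.symm ▸ hxj, b.symm ▸ hxv, hx3⟩
      rw [hprod, hset, map_mul]
      ring
  calc mu r lam A
      = ∑ M ∈ (matchings lam A).filter (fun M => v ∈ mVerts M),
          (∏ i ∈ A \ mVerts M, (X - C (r i))) * C (∏ e ∈ M, lam e.1 e.2)
        + ∑ M ∈ (matchings lam A).filter (fun M => v ∉ mVerts M),
          (∏ i ∈ A \ mVerts M, (X - C (r i))) * C (∏ e ∈ M, lam e.1 e.2) := by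
        rw [mu, Finset.sum_filter_add_sum_filter_not]
    _ = _ := by rw [huncov, hcov]; ring

theorem mu_monic (r : Fin n → ℝ) (hsym : ∀ j k, lam j k = lam k j) (A : Finset (Fin n)) :
    (mu r lam A).Monic ∧ (mu r lam A).degree = (A.card : WithBot ℕ) := by
  induction A using Finset.strongInduction with
  | _ A ih =>
  rcases A.eq_empty_or_nonempty with rfl | ⟨v, hv⟩
  · rw [mu_empty]
    exact ⟨monic_one, by simp⟩
  · have hcard : 1 ≤ A.card := Finset.card_pos.2 ⟨v, hv⟩
    have h1 := ih (A.erase v) (Finset.erase_ssubset hv)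
    have deg1 : ((X - C (r v)) * mu r lam (A.erase v)).degree = (A.card : WithBot ℕ) := by
      rw [degree_mul, degree_X_sub_C, h1.2, Finset.card_erase_of_mem hv]
      rw [show ((1 : WithBot ℕ) = ((1 : ℕ) : WithBot ℕ)) from rfl, ← Nat.cast_add]
      congr 1
      omega
    have degsum : (∑ j ∈ A.erase v, C (lam v j) * mu r lam ((A.erase v).erase j)).degree
        < ((X - C (r v)) * mu r lam (A.erase v)).degree := by
      rw [deg1]
      refine lt_of_le_of_lt (degree_sum_le _ _) ?_
      rw [Finset.sup_lt_iff (by exact_mod_cast WithBot.bot_lt_coe A.card)]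
      intro j hj
      refine lt_of_le_of_lt (degree_mul_le _ _) ?_
      have hjv : j ≠ v := (Finset.mem_erase.1 hj).1
      have hjA : j ∈ A := Finset.mem_of_mem_erase hj
      have hss : (A.erase v).erase j ⊂ A := by
        refine (Finset.ssubset_iff_of_subset ((Finset.erase_subset _ _).trans
          (Finset.erase_subset _ _))).2 ⟨v, hv, ?_⟩
        simp [Finset.mem_erase]
      have h2 := ih _ hss
      refine lt_of_le_of_lt (add_le_add degree_C_le h2.2.le) ?_
      rw [zero_add]
      have hcard2 : ((A.erase v).erase j).card < A.card := Finset.card_lt_card hss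
      exact_mod_cast hcard2
    have monic1 : ((X - C (r v)) * mu r lam (A.erase v)).Monic := (monic_X_sub_C _).mul h1.1
    rw [mu_rec r hsym hv]
    exact ⟨monic1.add_of_left degsum,
      by rw [degree_add_eq_left_of_degree_lt degsum, deg1]⟩

lemma mu_ne_zero (r : Fin n → ℝ) (hsym : ∀ j k, lam j k = lam k j) (A : Finset (Fin n)) :
    mu r lam A ≠ 0 := (mu_monic r hsym A).1.ne_zero

lemma ofReal_mul_im (c : ℝ) (z : ℂ) : ((c : ℂ) * z).im = c * z.im := by
  simp [Complex.mul_im]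

open Complex in
theorem mu_herglotz (r : Fin n → ℝ) (hsym : ∀ j k, lam j k = lam k j)
    (hnonpos : ∀ j k, lam j k ≤ 0) (A : Finset (Fin n)) :
    (∀ z : ℂ, 0 < z.im → (Polynomial.aeval z) (mu r lam A) ≠ 0) ∧
      (∀ v ∈ A, ∀ z : ℂ, 0 < z.im →
        0 < ((Polynomial.aeval z) (mu r lam A) / (Polynomial.aeval z) (mu r lam (A.erase v))).im) := by
  induction A using Finset.strongInduction with
  | _ A ih =>
  have part2 : ∀ v ∈ A, ∀ z : ℂ, 0 < z.im →
      0 < ((Polynomial.aeval z) (mu r lam A) / (Polynomial.aeval z) (mu r lam (A.erase v))).im := by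
    intro v hv z hz
    have ihv := ih (A.erase v) (Finset.erase_ssubset hv)
    have hgz : (Polynomial.aeval z) (mu r lam (A.erase v)) ≠ 0 := ihv.1 z hz
    have hrec := congrArg (Polynomial.aeval z (R := ℝ)) (mu_rec r hsym hv)
    simp only [map_add, map_mul, map_sub, Polynomial.aeval_X, Polynomial.aeval_C, map_sum,
      Complex.coe_algebraMap] at hrec
    rw [hrec, add_div, Finset.sum_div, mul_div_cancel_right₀ _ hgz]
    have him : ∀ j ∈ A.erase v, 0 ≤ (((lam v j : ℝ) : ℂ) *
        ((Polynomial.aeval z) (mu r lam ((A.erase v).erase j)) /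
          (Polynomial.aeval z) (mu r lam (A.erase v)))).im := by
      intro j hj
      have h1 := ihv.2 j hj z hz
      set w := (Polynomial.aeval z) (mu r lam (A.erase v)) /
        (Polynomial.aeval z) (mu r lam ((A.erase v).erase j)) with hw
      have h2 : (Polynomial.aeval z) (mu r lam ((A.erase v).erase j)) /
          (Polynomial.aeval z) (mu r lam (A.erase v)) = w⁻¹ := by
        rw [hw, inv_div]
      rw [h2, ofReal_mul_im, Complex.inv_im]
      have hsq : 0 ≤ Complex.normSq w := Complex.normSq_nonneg _
      have hl := hnonpos v j
      have hd : -w.im / Complex.normSq w ≤ 0 :=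
        div_nonpos_of_nonpos_of_nonneg (by linarith) hsq
      nlinarith
    have himsum : 0 ≤ (∑ j ∈ A.erase v, (((lam v j : ℝ) : ℂ) *
        ((Polynomial.aeval z) (mu r lam ((A.erase v).erase j)) /
          (Polynomial.aeval z) (mu r lam (A.erase v))))).im := by
      rw [Complex.im_sum]
      exact Finset.sum_nonneg him
    have hstep : (∑ j ∈ A.erase v, ((lam v j : ℝ) : ℂ) *
          (Polynomial.aeval z) (mu r lam ((A.erase v).erase j)) /
          (Polynomial.aeval z) (mu r lam (A.erase v))).im =
        (∑ j ∈ A.erase v, (((lam v j : ℝ) : ℂ) *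
          ((Polynomial.aeval z) (mu r lam ((A.erase v).erase j)) /
            (Polynomial.aeval z) (mu r lam (A.erase v))))).im := by
      congr 1
      refine Finset.sum_congr rfl fun j _ => ?_
      rw [mul_div_assoc]
    rw [Complex.add_im, hstep]
    have : (z - ((r v : ℝ) : ℂ)).im = z.im := by
      simp [Complex.sub_im, Complex.ofReal_im]
    rw [this]
    linarith
  refine ⟨?_, part2⟩
  rcases A.eq_empty_or_nonempty with rfl | ⟨v, hv⟩
  · intro z hz
    rw [mu_empty]
    simp
  · intro z hz hzero
    have h := part2 v hv z hz
    rw [hzero, zero_div] at h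
    simp at h

open Complex Filter Topology in
lemma exp_real_angle (x : ℝ) :
    Complex.exp ((x : ℂ) * Complex.I) = (Real.cos x : ℂ) + (Real.sin x : ℂ) * Complex.I := by
  rw [Complex.exp_mul_I, Complex.ofReal_cos, Complex.ofReal_sin]

open Complex Filter Topology in
lemma herglotz_mult_le (f g : Polynomial ℝ) (θ : ℝ)
    (H : ∀ z : ℂ, 0 < z.im → 0 < ((Polynomial.aeval z f) / (Polynomial.aeval z g)).im)
    (hf : f ≠ 0) (hg : g ≠ 0) :
    f.rootMultiplicity θ ≤ g.rootMultiplicity θ + 1 := by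
  by_contra hab'
  set a := f.rootMultiplicity θ with ha
  set b := g.rootMultiplicity θ with hb
  have hab : b + 2 ≤ a := by omega
  set d := a - b with hd
  have hd2 : 2 ≤ d := by omega
  have had : a = b + d := by omega
  have hdpos : (0 : ℝ) < d := by positivity
  set f1 := f /ₘ (X - C θ) ^ a with hf1def
  set g1 := g /ₘ (X - C θ) ^ b with hg1def
  have hfd : (X - C θ) ^ a * f1 = f := f.pow_mul_divByMonic_rootMultiplicity_eq θ
  have hgd : (X - C θ) ^ b * g1 = g := g.pow_mul_divByMonic_rootMultiplicity_eq θ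
  have hf1 : f1.eval θ ≠ 0 := eval_divByMonic_pow_rootMultiplicity_ne_zero θ hf
  have hg1 : g1.eval θ ≠ 0 := eval_divByMonic_pow_rootMultiplicity_ne_zero θ hg
  have hfz : ∀ z : ℂ, Polynomial.aeval z f = (z - (θ : ℂ)) ^ a * Polynomial.aeval z f1 := by
    intro z
    conv_lhs => rw [← hfd]
    simp only [map_mul, map_pow, map_sub, Polynomial.aeval_X, Polynomial.aeval_C,
      Complex.coe_algebraMap]
  have hgz : ∀ z : ℂ, Polynomial.aeval z g = (z - (θ : ℂ)) ^ b * Polynomial.aeval z g1 := by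
    intro z
    conv_lhs => rw [← hgd]
    simp only [map_mul, map_pow, map_sub, Polynomial.aeval_X, Polynomial.aeval_C,
      Complex.coe_algebraMap]
  set c : ℝ := f1.eval θ / g1.eval θ with hcdef
  have hc : c ≠ 0 := div_ne_zero hf1 hg1
  have key : ∀ (φ : ℝ) (u0 : ℂ), 0 < φ → φ < Real.pi →
      Complex.exp ((φ : ℂ) * Complex.I) ^ d = u0 → (u0 * (c : ℂ)).im < 0 → False := by
    intro φ u0 hφ0 hφπ hu0 hL
    have hsin : 0 < Real.sin φ := Real.sin_pos_of_pos_of_lt_pi hφ0 hφπ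
    set u : ℂ := Complex.exp ((φ : ℂ) * Complex.I) with hu
    have hune : u ≠ 0 := Complex.exp_ne_zero _
    have hui : u.im = Real.sin φ := by
      rw [hu, exp_real_angle]
      simp only [Complex.add_im, Complex.ofReal_im, Complex.mul_im, Complex.ofReal_re,
        Complex.I_im, Complex.I_re, mul_one, mul_zero, zero_add, add_zero]
    set W : ℝ → ℂ := fun t =>
      Polynomial.aeval ((θ : ℂ) + (t : ℂ) * u) f1 / Polynomial.aeval ((θ : ℂ) + (t : ℂ) * u) g1
      with hW
    have hcontz : Continuous fun t : ℝ => (θ : ℂ) + (t : ℂ) * u :=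
      continuous_const.add (Complex.continuous_ofReal.mul continuous_const)
    have haevθ : ∀ p : Polynomial ℝ, Polynomial.aeval ((θ : ℂ)) p = ((p.eval θ : ℝ) : ℂ) := by
      intro p
      rw [show ((θ : ℝ) : ℂ) = algebraMap ℝ ℂ θ from rfl,
        aeval_algebraMap_apply_eq_algebraMap_eval]
      rfl
    have hcont1 : Tendsto (fun t : ℝ => Polynomial.aeval ((θ : ℂ) + (t : ℂ) * u) f1)
        (𝓝[>] (0:ℝ)) (𝓝 ((f1.eval θ : ℝ) : ℂ)) := by
      have := (f1.continuous_aeval.comp hcontz).tendsto 0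
      simp only [Function.comp, Complex.ofReal_zero, zero_mul, add_zero] at this
      rw [haevθ f1] at this
      exact this.mono_left nhdsWithin_le_nhds
    have hcont2 : Tendsto (fun t : ℝ => Polynomial.aeval ((θ : ℂ) + (t : ℂ) * u) g1)
        (𝓝[>] (0:ℝ)) (𝓝 ((g1.eval θ : ℝ) : ℂ)) := by
      have := (g1.continuous_aeval.comp hcontz).tendsto 0
      simp only [Function.comp, Complex.ofReal_zero, zero_mul, add_zero] at this
      rw [haevθ g1] at this
      exact this.mono_left nhdsWithin_le_nhds
    have hWt : Tendsto W (𝓝[>] (0:ℝ)) (𝓝 ((c : ℂ))) := by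
      have := hcont1.div hcont2 (by exact_mod_cast hg1)
      rw [hcdef]
      push_cast
      exact this
    have hV : Tendsto (fun t => (u0 * W t).im) (𝓝[>] (0:ℝ)) (𝓝 ((u0 * (c : ℂ)).im)) :=
      (Complex.continuous_im.tendsto _).comp (hWt.const_mul u0)
    have hev : ∀ᶠ t in 𝓝[>] (0:ℝ), (u0 * W t).im < 0 := hV.eventually (eventually_lt_nhds hL)
    have hmem : ∀ᶠ t in 𝓝[>] (0:ℝ), t ∈ Set.Ioi (0:ℝ) := self_mem_nhdsWithin
    obtain ⟨t, htneg, ht0⟩ := (hev.and hmem).exists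
    rw [Set.mem_Ioi] at ht0
    set z : ℂ := (θ : ℂ) + (t : ℂ) * u with hz
    have hzim : 0 < z.im := by
      rw [hz]
      simp only [Complex.add_im, Complex.ofReal_im, Complex.mul_im, Complex.ofReal_re, hui,
        zero_add, zero_mul, sub_zero, add_zero, mul_zero]
      positivity
    have htu : (t : ℂ) * u ≠ 0 := mul_ne_zero (by exact_mod_cast ht0.ne') hune
    have hzt : z - (θ : ℂ) = (t : ℂ) * u := by rw [hz]; ring
    have hratio : Polynomial.aeval z f / Polynomial.aeval z g
        = ((t ^ d : ℝ) : ℂ) * (u0 * W t) := by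
      rw [hfz z, hgz z, hzt, had, pow_add, mul_assoc,
        mul_div_mul_left _ _ (pow_ne_zero b htu), hW]
      rw [mul_div_assoc, mul_pow, ← Complex.ofReal_pow, hu, hu0, mul_assoc]
    have hpos := H z hzim
    rw [hratio, ofReal_mul_im] at hpos
    have : (t ^ d) * (u0 * W t).im < 0 := mul_neg_of_pos_of_neg (by positivity) htneg
    linarith
  have hd2' : (2 : ℝ) ≤ (d : ℝ) := by exact_mod_cast hd2
  rcases lt_or_gt_of_ne hc with hcneg | hcpos
  · -- c < 0 : take φ = π/(2d), u0 = I
    refine key (Real.pi / (2 * d)) Complex.I ?_ ?_ ?_ ?_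
    · positivity
    · rw [div_lt_iff₀ (by positivity)]
      nlinarith [Real.pi_pos, hd2']
    · rw [← Complex.exp_nat_mul]
      have harg : ((d : ℂ)) * ((Real.pi / (2 * d) : ℝ) : ℂ) * Complex.I
          = ((Real.pi / 2 : ℝ) : ℂ) * Complex.I := by
        have hdne : (d : ℂ) ≠ 0 := by exact_mod_cast (by positivity : (0:ℝ) < d).ne'
        push_cast
        field_simp
      rw [← mul_assoc, harg, exp_real_angle]
      simp [Real.cos_pi_div_two, Real.sin_pi_div_two]
    · rw [Complex.I_mul_im, Complex.ofReal_re]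
      exact hcneg
  · -- c > 0 : take φ = 3π/(2d), u0 = -I
    refine key (3 * Real.pi / (2 * d)) (-Complex.I) ?_ ?_ ?_ ?_
    · positivity
    · rw [div_lt_iff₀ (by positivity)]
      nlinarith [Real.pi_pos, hd2']
    · rw [← Complex.exp_nat_mul]
      have harg : ((d : ℂ)) * ((3 * Real.pi / (2 * d) : ℝ) : ℂ) * Complex.I
          = ((Real.pi : ℝ) : ℂ) * Complex.I + ((Real.pi / 2 : ℝ) : ℂ) * Complex.I := by
        have hdne : (d : ℂ) ≠ 0 := by exact_mod_cast (by positivity : (0:ℝ) < d).ne'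
        push_cast
        field_simp
        ring
      rw [← mul_assoc, harg, Complex.exp_add, Complex.exp_pi_mul_I, exp_real_angle]
      simp [Real.cos_pi_div_two, Real.sin_pi_div_two]
    · simp only [neg_mul, Complex.neg_im, Complex.I_mul_im, Complex.ofReal_re]
      linarith

lemma rootMultiplicity_neg' (p : Polynomial ℝ) (θ : ℝ) :
    (-p).rootMultiplicity θ = p.rootMultiplicity θ := by
  rcases eq_or_ne p 0 with rfl | hp
  · simp
  · have h1 : (-1 : Polynomial ℝ) * p ≠ 0 := by
      simpa using hp
    rw [show -p = (-1 : Polynomial ℝ) * p by ring, Polynomial.rootMultiplicity_mul h1]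
    have : ((-1 : Polynomial ℝ)).rootMultiplicity θ = 0 :=
      Polynomial.rootMultiplicity_eq_zero (by simp [Polynomial.IsRoot])
    omega

open Complex in
lemma herglotz_mult_ge (f g : Polynomial ℝ) (θ : ℝ)
    (H : ∀ z : ℂ, 0 < z.im → 0 < ((Polynomial.aeval z f) / (Polynomial.aeval z g)).im)
    (hf : f ≠ 0) (hg : g ≠ 0) :
    g.rootMultiplicity θ ≤ f.rootMultiplicity θ + 1 := by
  have H' : ∀ z : ℂ, 0 < z.im → 0 < ((Polynomial.aeval z (-g)) / (Polynomial.aeval z f)).im := by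
    intro z hz
    have h := H z hz
    have hfz : Polynomial.aeval z f ≠ 0 := by
      intro h0; rw [h0, zero_div] at h; simp at h
    have hgz : Polynomial.aeval z g ≠ 0 := by
      intro h0; rw [h0, div_zero] at h; simp at h
    rw [map_neg, neg_div]
    have heq : (Polynomial.aeval z g) / (Polynomial.aeval z f)
        = ((Polynomial.aeval z f) / (Polynomial.aeval z g))⁻¹ := by rw [inv_div]
    rw [Complex.neg_im, heq, Complex.inv_im]
    have hns : 0 < Complex.normSq ((Polynomial.aeval z f) / (Polynomial.aeval z g)) :=
      Complex.normSq_pos.2 (div_ne_zero hfz hgz)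
    rw [neg_div, neg_neg]
    exact div_pos h hns
  have := herglotz_mult_le (-g) f θ H' (neg_ne_zero.2 hg) hf
  rwa [rootMultiplicity_neg'] at this

theorem mu_interlace (r : Fin n → ℝ) (hsym : ∀ j k, lam j k = lam k j)
    (hnonpos : ∀ j k, lam j k ≤ 0) {A : Finset (Fin n)} {v : Fin n} (hv : v ∈ A) (θ : ℝ) :
    (mu r lam A).rootMultiplicity θ ≤ (mu r lam (A.erase v)).rootMultiplicity θ + 1 ∧
      (mu r lam (A.erase v)).rootMultiplicity θ ≤ (mu r lam A).rootMultiplicity θ + 1 := by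
  have H := (mu_herglotz r hsym hnonpos A).2 v hv
  exact ⟨herglotz_mult_le _ _ θ H (mu_ne_zero r hsym A) (mu_ne_zero r hsym _),
    herglotz_mult_ge _ _ θ H (mu_ne_zero r hsym A) (mu_ne_zero r hsym _)⟩

open Filter Topology in
lemma even_rm_of_nonneg {p : Polynomial ℝ} (hp : p ≠ 0) (h : ∀ x : ℝ, 0 ≤ p.eval x) (θ : ℝ) :
    Even (p.rootMultiplicity θ) := by
  by_contra hodd
  rw [Nat.not_even_iff_odd] at hodd
  set m := p.rootMultiplicity θ with hm
  set p1 := p /ₘ (X - C θ) ^ m with hp1def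
  have hpd : (X - C θ) ^ m * p1 = p := p.pow_mul_divByMonic_rootMultiplicity_eq θ
  have hp1 : p1.eval θ ≠ 0 := eval_divByMonic_pow_rootMultiplicity_ne_zero θ hp
  have hev : ∀ x : ℝ, p.eval x = (x - θ) ^ m * p1.eval x := by
    intro x
    conv_lhs => rw [← hpd]
    simp [Polynomial.eval_mul, Polynomial.eval_pow]
  have hcont : ContinuousAt (fun x : ℝ => p1.eval x) θ := (Polynomial.continuousAt p1)
  rcases lt_or_gt_of_ne hp1 with hneg | hpos
  · -- p1 θ < 0 : go right of θ
    have h1 : ∀ᶠ x in 𝓝[>] θ, p1.eval x < 0 :=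
      ((hcont.tendsto.mono_left nhdsWithin_le_nhds).eventually (eventually_lt_nhds hneg))
    have h2 : ∀ᶠ x in 𝓝[>] θ, θ < x := self_mem_nhdsWithin
    obtain ⟨x, hx1, hx2⟩ := (h1.and h2).exists
    have : p.eval x < 0 := by
      rw [hev x]
      exact mul_neg_of_pos_of_neg (pow_pos (by linarith) _) hx1
    exact absurd (h x) (by linarith)
  · -- p1 θ > 0 : go left of θ
    have h1 : ∀ᶠ x in 𝓝[<] θ, 0 < p1.eval x := by
      refine ((hcont.tendsto.mono_left nhdsWithin_le_nhds).eventually ?_)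
      exact eventually_gt_nhds hpos
    have h2 : ∀ᶠ x in 𝓝[<] θ, x < θ := self_mem_nhdsWithin
    obtain ⟨x, hx1, hx2⟩ := (h1.and h2).exists
    have hneg' : (x - θ) ^ m < 0 := Odd.pow_neg hodd (by linarith)
    have : p.eval x < 0 := by
      rw [hev x]
      exact mul_neg_of_neg_of_pos hneg' hx1
    exact absurd (h x) (by linarith)

open Filter Topology in
lemma rm_le_of_le {u v : Polynomial ℝ} (hu : u ≠ 0) (h0 : ∀ x : ℝ, 0 ≤ u.eval x)
    (hle : ∀ x : ℝ, u.eval x ≤ v.eval x) (θ : ℝ) :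
    v.rootMultiplicity θ ≤ u.rootMultiplicity θ := by
  by_contra hlt'
  push_neg at hlt'
  have hv : v ≠ 0 := by
    intro h
    rw [h] at hlt'
    simp at hlt'
  set mu_ := u.rootMultiplicity θ with hmu
  set mv := v.rootMultiplicity θ with hmv
  set u1 := u /ₘ (X - C θ) ^ mu_ with hu1def
  set v1 := v /ₘ (X - C θ) ^ mv with hv1def
  have hud : (X - C θ) ^ mu_ * u1 = u := u.pow_mul_divByMonic_rootMultiplicity_eq θ
  have hvd : (X - C θ) ^ mv * v1 = v := v.pow_mul_divByMonic_rootMultiplicity_eq θ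
  have hu1 : u1.eval θ ≠ 0 := eval_divByMonic_pow_rootMultiplicity_ne_zero θ hu
  have huev : ∀ x : ℝ, u.eval x = (x - θ) ^ mu_ * u1.eval x := by
    intro x
    conv_lhs => rw [← hud]
    simp [Polynomial.eval_mul, Polynomial.eval_pow]
  have hvev : ∀ x : ℝ, v.eval x = (x - θ) ^ mv * v1.eval x := by
    intro x
    conv_lhs => rw [← hvd]
    simp [Polynomial.eval_mul, Polynomial.eval_pow]
  have heven : Even mu_ := even_rm_of_nonneg hu h0 θ
  -- u1 θ > 0
  have hu1pos : 0 < u1.eval θ := by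
    rcases lt_or_gt_of_ne hu1 with hneg | hpos
    · exfalso
      have hcont : ContinuousAt (fun x : ℝ => u1.eval x) θ := Polynomial.continuousAt u1
      have h1 : ∀ᶠ x in 𝓝[>] θ, u1.eval x < 0 :=
        ((hcont.tendsto.mono_left nhdsWithin_le_nhds).eventually (eventually_lt_nhds hneg))
      have h2 : ∀ᶠ x in 𝓝[>] θ, θ < x := self_mem_nhdsWithin
      obtain ⟨x, hx1, hx2⟩ := (h1.and h2).exists
      have : u.eval x < 0 := by
        rw [huev x]
        exact mul_neg_of_pos_of_neg (pow_pos (by linarith) _) hx1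
      exact absurd (h0 x) (by linarith)
    · exact hpos
  -- on Ioi θ : u1 x ≤ (x-θ)^(mv-mu_) * v1 x
  have hk : 1 ≤ mv - mu_ := by omega
  have hcomp : ∀ x ∈ Set.Ioi θ, u1.eval x ≤ (x - θ) ^ (mv - mu_) * v1.eval x := by
    intro x hx
    rw [Set.mem_Ioi] at hx
    have hxθ : (0:ℝ) < x - θ := by linarith
    have := hle x
    rw [huev x, hvev x, show mv = mu_ + (mv - mu_) by omega, pow_add, mul_assoc] at this
    exact le_of_mul_le_mul_left this (pow_pos hxθ _)
  have hT1 : Tendsto (fun x : ℝ => u1.eval x) (𝓝[>] θ) (𝓝 (u1.eval θ)) :=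
    (Polynomial.continuousAt u1).tendsto.mono_left nhdsWithin_le_nhds
  have hT2 : Tendsto (fun x : ℝ => (x - θ) ^ (mv - mu_) * v1.eval x) (𝓝[>] θ)
      (𝓝 ((θ - θ) ^ (mv - mu_) * v1.eval θ)) := by
    refine Tendsto.mul ?_ ((Polynomial.continuousAt v1).tendsto.mono_left nhdsWithin_le_nhds)
    exact ((continuousAt_id.sub continuousAt_const).pow _).tendsto.mono_left nhdsWithin_le_nhds
  have hzero : (θ - θ) ^ (mv - mu_) * v1.eval θ = 0 := by
    rw [sub_self, zero_pow (by omega)]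
    ring
  rw [hzero] at hT2
  have hle' : u1.eval θ ≤ 0 := by
    refine le_of_tendsto_of_tendsto hT1 hT2 ?_
    filter_upwards [self_mem_nhdsWithin] with x hx
    exact hcomp x hx
  linarith

lemma rm_add_eq_left {p q : Polynomial ℝ} (hp : p ≠ 0)
    (hlt : p.rootMultiplicity θ < q.rootMultiplicity θ) :
    (p + q).rootMultiplicity θ = p.rootMultiplicity θ := by
  have hq : q ≠ 0 := by
    intro h
    rw [h] at hlt
    simp at hlt
  have hpq : p + q ≠ 0 := by
    intro h
    have : q = -p := by linear_combination h
    rw [this, rootMultiplicity_neg'] at hlt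
    omega
  have h1 : p.rootMultiplicity θ ≤ (p + q).rootMultiplicity θ := by
    have := Polynomial.rootMultiplicity_add θ hpq
    omega
  have h2 : (p + q).rootMultiplicity θ ≤ p.rootMultiplicity θ := by
    by_contra hgt
    push_neg at hgt
    have hrw : p = (p + q) + -q := by ring
    have hneg : (-q).rootMultiplicity θ = q.rootMultiplicity θ := rootMultiplicity_neg' q θ
    have := Polynomial.rootMultiplicity_add (p := p + q) (q := -q) θ (by rw [← hrw]; exact hp)
    rw [← hrw, hneg] at this
    omega
  omega

theorem D_ineq (r : Fin n → ℝ) (hsym : ∀ j k, lam j k = lam k j)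
    (hnonpos : ∀ j k, lam j k ≤ 0) (A : Finset (Fin n)) :
    ∀ i k : Fin n, i ∈ A → k ∈ A → i ≠ k → ∀ x : ℝ,
      (-lam i k) * ((mu r lam ((A.erase i).erase k)).eval x) ^ 2
        ≤ (mu r lam (A.erase i)).eval x * (mu r lam (A.erase k)).eval x
          - (mu r lam A).eval x * (mu r lam ((A.erase i).erase k)).eval x := by
  induction A using Finset.strongInduction with
  | _ A ih =>
  intro i k hi hk hik x
  set B := A.erase i with hB
  have hkB : k ∈ B := Finset.mem_erase.2 ⟨fun h => hik h.symm, hk⟩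
  have hiAk : i ∈ A.erase k := Finset.mem_erase.2 ⟨hik, hi⟩
  have hBA : B ⊂ A := Finset.erase_ssubset hi
  -- evaluated recurrences
  have h1 := congrArg (Polynomial.eval x) (mu_rec r hsym hi)
  have h2 := congrArg (Polynomial.eval x) (mu_rec (A := A.erase k) r hsym hiAk)
  simp only [Polynomial.eval_add, Polynomial.eval_mul, Polynomial.eval_sub, Polynomial.eval_X,
    Polynomial.eval_C, Polynomial.eval_finset_sum] at h1 h2
  have hcomm : (A.erase k).erase i = B.erase k := Finset.erase_right_comm
  rw [hcomm] at h2
  have hcomm2 : ∀ j : Fin n, (B.erase k).erase j = (B.erase j).erase k := by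
    intro j
    exact Finset.erase_right_comm
  -- notation
  set fx := (mu r lam A).eval x
  set gx := (mu r lam B).eval x
  set px := (mu r lam (A.erase k)).eval x
  set qx := (mu r lam (B.erase k)).eval x
  have h2' : px = (x - r i) * qx
      + ∑ j ∈ B.erase k, lam i j * (mu r lam ((B.erase j).erase k)).eval x := by
    rw [h2]
    congr 1
    refine Finset.sum_congr rfl fun j hj => ?_
    rw [hcomm2 j]
  -- expand D
  have hsplit : ∑ j ∈ B, lam i j * (mu r lam (B.erase j)).eval x
      = lam i k * qx + ∑ j ∈ B.erase k, lam i j * (mu r lam (B.erase j)).eval x := by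
    rw [← Finset.add_sum_erase _ _ hkB]
  have hsum : gx * (∑ j ∈ B.erase k, lam i j * (mu r lam ((B.erase j).erase k)).eval x)
      - (∑ j ∈ B.erase k, lam i j * (mu r lam (B.erase j)).eval x) * qx
      = ∑ j ∈ B.erase k, lam i j *
          (gx * (mu r lam ((B.erase j).erase k)).eval x
            - (mu r lam (B.erase j)).eval x * qx) := by
    rw [Finset.mul_sum, Finset.sum_mul, ← Finset.sum_sub_distrib]
    exact Finset.sum_congr rfl fun j _ => by ring
  have hexpand : gx * px - fx * qx
      = (- lam i k) * qx ^ 2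
        + ∑ j ∈ B.erase k, lam i j *
            (gx * (mu r lam ((B.erase j).erase k)).eval x
              - (mu r lam (B.erase j)).eval x * qx) := by
    rw [h2', h1, hsplit]
    linear_combination hsum
  have hterm : ∀ j ∈ B.erase k, 0 ≤ lam i j *
      (gx * (mu r lam ((B.erase j).erase k)).eval x
        - (mu r lam (B.erase j)).eval x * qx) := by
    intro j hj
    have hjB : j ∈ B := Finset.mem_of_mem_erase hj
    have hjk : j ≠ k := (Finset.mem_erase.1 hj).1
    have ihj := ih B hBA j k hjB hkB hjk x
    have h0 : 0 ≤ (-lam j k) * ((mu r lam ((B.erase j).erase k)).eval x) ^ 2 :=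
      mul_nonneg (neg_nonneg.2 (hnonpos j k)) (sq_nonneg _)
    have hY : 0 ≤ (mu r lam (B.erase j)).eval x * qx
        - gx * (mu r lam ((B.erase j).erase k)).eval x := le_trans h0 ihj
    have hprod := mul_nonneg (neg_nonneg.2 (hnonpos i j)) hY
    nlinarith [hprod]
  have hsumnn : 0 ≤ ∑ j ∈ B.erase k, lam i j *
      (gx * (mu r lam ((B.erase j).erase k)).eval x
        - (mu r lam (B.erase j)).eval x * qx) := Finset.sum_nonneg hterm
  linarith [hexpand]

end WMP

open WMP in
theorem stmt_14' (n : ℕ) (hn : 0 < n) (r : Fin n → ℝ) (lam : Fin n → Fin n → ℝ)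
    (hsym : ∀ j k, lam j k = lam k j) (hnonpos : ∀ j k, lam j k ≤ 0)
    (hdiag : ∀ i, lam i i = 0) (θ : ℝ) (i : Fin n)
    (hi : i ∈ frontierZero r lam θ (Finset.univ : Finset (Fin n))) :
    (mu r lam (Finset.univ.erase i)).rootMultiplicity θ =
      (mu r lam (Finset.univ : Finset (Fin n))).rootMultiplicity θ + 1 := by
  classical
  simp only [frontierZero, zeroSet, Set.mem_setOf_eq] at hi
  obtain ⟨hiu, hiz, w, hwz, hlw⟩ := hi
  obtain ⟨hwu, hwm⟩ := hwz
  have hiw : i ≠ w := by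
    intro h
    rw [h] at hlw
    exact hlw (hdiag w)
  set f := mu r lam (Finset.univ : Finset (Fin n)) with hfdef
  set g := mu r lam (Finset.univ.erase i) with hgdef
  set p := mu r lam (Finset.univ.erase w) with hpdef
  set q := mu r lam ((Finset.univ.erase i).erase w) with hqdef
  have hf0 : f ≠ 0 := mu_ne_zero r hsym _
  have hg0 : g ≠ 0 := mu_ne_zero r hsym _
  have hp0 : p ≠ 0 := mu_ne_zero r hsym _
  have hq0 : q ≠ 0 := mu_ne_zero r hsym _
  set m := f.rootMultiplicity θ with hm
  -- i is not essential
  have hine : m ≠ g.rootMultiplicity θ + 1 := by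
    intro h
    exact hiz ⟨Finset.mem_univ i, h⟩
  obtain ⟨hint_i1, hint_i2⟩ := mu_interlace r hsym hnonpos (Finset.mem_univ i) θ
  rw [← hfdef, ← hgdef, ← hm] at hint_i1 hint_i2
  have hgm : g.rootMultiplicity θ = m ∨ g.rootMultiplicity θ = m + 1 := by omega
  rcases hgm with hgm | hgm
  swap
  · exact hgm
  exfalso
  -- now g has multiplicity m; derive contradiction
  have hwmem : w ∈ Finset.univ.erase i := Finset.mem_erase.2 ⟨fun h => hiw h.symm, Finset.mem_univ w⟩
  have himem : i ∈ Finset.univ.erase w := Finset.mem_erase.2 ⟨hiw, Finset.mem_univ i⟩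
  have hpm : p.rootMultiplicity θ + 1 = m := hwm.symm
  have hcomm : (Finset.univ.erase w).erase i = (Finset.univ.erase i).erase w :=
    Finset.erase_right_comm
  obtain ⟨hint_q1, hint_q2⟩ := mu_interlace (A := Finset.univ.erase w) r hsym hnonpos himem θ
  rw [hcomm] at hint_q1 hint_q2
  rw [← hpdef, ← hqdef] at hint_q1 hint_q2
  have hqle : q.rootMultiplicity θ ≤ m := by omega
  -- the nonnegative polynomial D
  set Dp : Polynomial ℝ := g * p - f * q with hDdef
  have hDev : ∀ x : ℝ, Dp.eval x = g.eval x * p.eval x - f.eval x * q.eval x := by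
    intro x
    simp [hDdef]
  set u : Polynomial ℝ := Polynomial.C (-lam i w) * q ^ 2 with hudef
  have hlampos : 0 < -lam i w := by
    have := hnonpos i w
    rcases lt_or_eq_of_le this with h | h
    · linarith
    · exact absurd h hlw
  have huev : ∀ x : ℝ, u.eval x = (-lam i w) * (q.eval x) ^ 2 := by
    intro x
    simp [hudef]
  have hu0 : u ≠ 0 := mul_ne_zero (by
      simp only [ne_eq, Polynomial.C_eq_zero]
      linarith) (pow_ne_zero 2 hq0)
  have hunn : ∀ x : ℝ, 0 ≤ u.eval x := by
    intro x
    rw [huev x]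
    positivity
  have hle : ∀ x : ℝ, u.eval x ≤ Dp.eval x := by
    intro x
    rw [huev x, hDev x]
    exact D_ineq r hsym hnonpos Finset.univ i w (Finset.mem_univ i) (Finset.mem_univ w) hiw x
  have hDnn : ∀ x : ℝ, 0 ≤ Dp.eval x := fun x => le_trans (hunn x) (hle x)
  have hD0 : Dp ≠ 0 := by
    intro h
    have hzero : ∀ x : ℝ, u.eval x = 0 := by
      intro x
      have h1 := hle x
      rw [h, Polynomial.eval_zero] at h1
      exact le_antisymm h1 (hunn x)
    exact hu0 (Polynomial.funext (by simpa using hzero))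
  have hurm : u.rootMultiplicity θ = 2 * q.rootMultiplicity θ := by
    rw [hudef, Polynomial.rootMultiplicity_mul (by rw [← hudef]; exact hu0)]
    have hC : (Polynomial.C (-lam i w)).rootMultiplicity θ = 0 :=
      Polynomial.rootMultiplicity_eq_zero (by
        simp only [Polynomial.IsRoot, Polynomial.eval_C]
        linarith)
    have hsq : (q ^ 2).rootMultiplicity θ = 2 * q.rootMultiplicity θ := by
      rw [sq, Polynomial.rootMultiplicity_mul (mul_ne_zero hq0 hq0)]
      ring
    rw [hC, hsq]
    ring
  have hDle : Dp.rootMultiplicity θ ≤ 2 * q.rootMultiplicity θ := by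
    have := rm_le_of_le hu0 hunn hle θ
    rwa [hurm] at this
  have hDeven : Even (Dp.rootMultiplicity θ) := even_rm_of_nonneg hD0 hDnn θ
  have hgp : (g * p).rootMultiplicity θ = m + (m - 1) := by
    rw [Polynomial.rootMultiplicity_mul (mul_ne_zero hg0 hp0), hgm]
    omega
  have hfq : (f * q).rootMultiplicity θ = m + q.rootMultiplicity θ := by
    rw [Polynomial.rootMultiplicity_mul (mul_ne_zero hf0 hq0)]
  have hm1 : 1 ≤ m := by omega
  have hDrw : Dp = g * p + -(f * q) := by rw [hDdef]; ring
  rcases eq_or_lt_of_le hqle with hqm | hqm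
  · -- q has multiplicity m : parity contradiction
    have hlt : (g * p).rootMultiplicity θ < (-(f * q)).rootMultiplicity θ := by
      rw [rootMultiplicity_neg', hgp, hfq, hqm]
      omega
    have : Dp.rootMultiplicity θ = m + (m - 1) := by
      rw [hDrw, rm_add_eq_left (mul_ne_zero hg0 hp0) hlt, hgp]
    rw [this] at hDeven
    rcases hDeven with ⟨c, hc⟩
    omega
  · -- q has multiplicity < m : minimum contradiction
    have hmin := Polynomial.rootMultiplicity_add (p := g * p) (q := -(f * q)) θ
      (by rw [← hDrw]; exact hD0)
    rw [rootMultiplicity_neg', hgp, hfq, ← hDrw] at hmin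
    omega

/-- the frontier `∂0_{θ,G}` is contained in `∞_{θ,G}`: every vertex `i` that
is not θ-essential but has a θ-essential neighbor satisfies `m_θ(G∖i) = m_θ(G) + 1`. -/
theorem stmt_14 (n : ℕ) (hn : 0 < n) (r : Fin n → ℝ) (lam : Fin n → Fin n → ℝ)
    (hsym : ∀ j k, lam j k = lam k j) (hnonpos : ∀ j k, lam j k ≤ 0)
    (hdiag : ∀ i, lam i i = 0) (θ : ℝ) (i : Fin n)
    (hi : i ∈ frontierZero r lam θ (Finset.univ : Finset (Fin n))) :
    (mu r lam (Finset.univ.erase i)).rootMultiplicity θ =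
      (mu r lam (Finset.univ : Finset (Fin n))).rootMultiplicity θ + 1 :=
  stmt_14' n hn r lam hsym hnonpos hdiag θ i hi
end
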